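/- arXiv:1008.3646 — 5 statements merged into one kernel-verified Lean document; each statement's English description precedes it below -/
import Mathlib

section
/- For any p,q,n with p+q = 2n and p,q ≥ 1, the complete bipartite graphs K_{n,n} and K_{p,q} are cospectral with respect to the normalized Laplacian. -/
open scoped Classical
noncomputable def adjM {V : Type*} [Fintype V] (G : SimpleGraph V) : Matrix V V ℝ :=
  fun u v => if G.Adj u v then 1 else 0
noncomputable def degM {V : Type*} [Fintype V] (G : SimpleGraph V) : Matrix V V ℝ :=
  Matrix.diagonal fun v => (G.degree v : ℝ)
noncomputable def normLap {V : Type*} [Fintype V] (G : SimpleGraph V) : Matrix V V ℝ :=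
  Matrix.diagonal (fun v => (Real.sqrt (G.degree v))⁻¹) * (degM G - adjM G) *
    Matrix.diagonal (fun v => (Real.sqrt (G.degree v))⁻¹)


open Matrix Polynomial

lemma degl (p q : ℕ) (a : Fin p) :
    (completeBipartiteGraph (Fin p) (Fin q)).degree (Sum.inl a) = q := by
  have h : (Finset.univ.filter (fun x : Fin p ⊕ Fin q => x.isRight = true)) =
      Finset.univ.map ⟨Sum.inr, Sum.inr_injective⟩ := by
    ext x; cases x <;> simp
  simp [SimpleGraph.degree, SimpleGraph.neighborFinset, h]

lemma degr (p q : ℕ) (b : Fin q) :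
    (completeBipartiteGraph (Fin p) (Fin q)).degree (Sum.inr b) = p := by
  have h : (Finset.univ.filter (fun x : Fin p ⊕ Fin q => x.isLeft = true)) =
      Finset.univ.map ⟨Sum.inl, Sum.inl_injective⟩ := by
    ext x; cases x <;> simp
  simp [SimpleGraph.degree, SimpleGraph.neighborFinset, h]

lemma blockEq (p q : ℕ) (hp : 1 ≤ p) (hq : 1 ≤ q) (x : ℝ) :
    x • (1 : Matrix (Fin p ⊕ Fin q) (Fin p ⊕ Fin q) ℝ) -
        normLap (completeBipartiteGraph (Fin p) (Fin q)) =
      Matrix.fromBlocks ((x - 1) • 1)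
        (((Real.sqrt q)⁻¹ * (Real.sqrt p)⁻¹) • Matrix.of fun _ _ => 1)
        (((Real.sqrt q)⁻¹ * (Real.sqrt p)⁻¹) • Matrix.of fun _ _ => 1)
        ((x - 1) • 1) := by
  have hq0 : (0:ℝ) < q := by exact_mod_cast hq
  have hp0 : (0:ℝ) < p := by exact_mod_cast hp
  have hsq : (Real.sqrt q)⁻¹ * (q:ℝ) * (Real.sqrt q)⁻¹ = 1 := by
    rw [← Real.mul_self_sqrt hq0.le]
    field_simp
    rw [Real.sq_sqrt (sq_nonneg _)]
  have hsp : (Real.sqrt p)⁻¹ * (p:ℝ) * (Real.sqrt p)⁻¹ = 1 := by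
    rw [← Real.mul_self_sqrt hp0.le]
    field_simp
    rw [Real.sq_sqrt (sq_nonneg _)]
  ext i j
  rcases i with a | b <;> rcases j with a' | b' <;>
    simp_all [normLap, degM, adjM, Matrix.mul_apply, Matrix.one_apply,
      Matrix.diagonal, degl, degr, Finset.sum_ite_eq, mul_comm] <;>
    split_ifs <;> simp_all

lemma evalCh {V : Type*} [Fintype V] [DecidableEq V] (M : Matrix V V ℝ) (x : ℝ) :
    Polynomial.eval x M.charpoly = Matrix.det (x • (1 : Matrix V V ℝ) - M) := by
  rw [Matrix.charpoly, ← coe_evalRingHom, RingHom.map_det]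
  congr 1
  ext i j
  by_cases h : i = j <;>
    simp [h, Matrix.charmatrix_apply, Matrix.one_apply, Matrix.sub_apply, Matrix.smul_apply]

lemma detJ (q : ℕ) (a b : ℝ) (ha : a ≠ 0) :
    Matrix.det (a • (1 : Matrix (Fin q) (Fin q) ℝ) + b • (Matrix.of fun _ _ => 1)) =
      a ^ q * (1 + q * (b / a)) := by
  have h1 : (b • (Matrix.of fun _ _ => (1:ℝ)) : Matrix (Fin q) (Fin q) ℝ) =
      a • (Matrix.replicateCol Unit (fun _ : Fin q => b / a) * Matrix.replicateRow Unit (fun _ : Fin q => (1:ℝ))) := by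
    ext i j
    simp [Matrix.mul_apply]
    field_simp
  rw [h1, ← smul_add, Matrix.det_smul, Matrix.det_one_add_replicateCol_mul_replicateRow]
  simp [dotProduct, mul_comm]

lemma keyEval (p q : ℕ) (hp : 1 ≤ p) (hq : 1 ≤ q) (x : ℝ) (hx : x ≠ 1) :
    Polynomial.eval x (normLap (completeBipartiteGraph (Fin p) (Fin q))).charpoly =
      (x - 1) ^ (p + q - 2) * (x ^ 2 - 2 * x) := by
  have hq0 : (0:ℝ) < q := by exact_mod_cast hq
  have hp0 : (0:ℝ) < p := by exact_mod_cast hp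
  have h1 : x - 1 ≠ 0 := sub_ne_zero.mpr hx
  rw [evalCh, blockEq p q hp hq]
  set c : ℝ := (Real.sqrt q)⁻¹ * (Real.sqrt p)⁻¹ with hc
  letI : Invertible ((x - 1) • (1 : Matrix (Fin p) (Fin p) ℝ)) :=
    ⟨(x - 1)⁻¹ • (1 : Matrix (Fin p) (Fin p) ℝ), by
      rw [Matrix.smul_mul, Matrix.mul_smul, smul_smul, one_mul, inv_mul_cancel₀ h1, one_smul], by
      rw [Matrix.smul_mul, Matrix.mul_smul, smul_smul, one_mul, mul_inv_cancel₀ h1, one_smul]⟩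
  rw [Matrix.det_fromBlocks₁₁]
  have hinv : ⅟((x - 1) • (1 : Matrix (Fin p) (Fin p) ℝ)) =
      (x - 1)⁻¹ • (1 : Matrix (Fin p) (Fin p) ℝ) := rfl
  have hcc : c * c = ((q : ℝ) * (p : ℝ))⁻¹ := by
    rw [hc]
    field_simp
    rw [Real.sq_sqrt hq0.le, Real.sq_sqrt hp0.le]
  have hJJ : (Matrix.of fun _ _ => (1:ℝ) : Matrix (Fin q) (Fin p) ℝ) *
        (Matrix.of fun _ _ => (1:ℝ) : Matrix (Fin p) (Fin q) ℝ) =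
      (p : ℝ) • (Matrix.of fun _ _ => (1:ℝ) : Matrix (Fin q) (Fin q) ℝ) := by
    ext i j
    simp [Matrix.mul_apply]
  have hCB : (c • (Matrix.of fun _ _ => (1:ℝ)) : Matrix (Fin q) (Fin p) ℝ) *
        ((x - 1)⁻¹ • (1 : Matrix (Fin p) (Fin p) ℝ)) *
        (c • (Matrix.of fun _ _ => (1:ℝ)) : Matrix (Fin p) (Fin q) ℝ) =
      (c * (x - 1)⁻¹ * c * p) • (Matrix.of fun _ _ => (1:ℝ) : Matrix (Fin q) (Fin q) ℝ) := by
    ext i j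
    simp [Matrix.mul_apply, Matrix.one_apply, Finset.sum_ite_eq, Finset.sum_const]
    ring
  rw [hinv, hCB]
  have hD : ((x - 1) • (1 : Matrix (Fin q) (Fin q) ℝ)) -
        (c * (x - 1)⁻¹ * c * (p:ℝ)) • (Matrix.of fun _ _ => (1:ℝ) : Matrix (Fin q) (Fin q) ℝ) =
      (x - 1) • (1 : Matrix (Fin q) (Fin q) ℝ) +
        (-(c * (x - 1)⁻¹ * c * (p:ℝ))) • (Matrix.of fun _ _ => (1:ℝ)) := by
    rw [sub_eq_add_neg, ← neg_smul]
  rw [hD, detJ q (x - 1) _ h1, Matrix.det_smul, Matrix.det_one, Fintype.card_fin]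
  have hb : -(c * (x - 1)⁻¹ * c * (p:ℝ)) = -(((q:ℝ) * (p:ℝ))⁻¹ * (x - 1)⁻¹ * (p:ℝ)) := by
    rw [← hcc]; ring
  rw [hb]
  have h2 : (1 : ℝ) + (q:ℝ) * (-(((q:ℝ)*(p:ℝ))⁻¹ * (x - 1)⁻¹ * (p:ℝ)) / (x - 1)) =
      1 - ((x-1)*(x-1))⁻¹ := by
    field_simp
    ring
  rw [h2]
  have hexp : (x-1)^p * ((x-1)^q * (1 - ((x-1)*(x-1))⁻¹)) =
      (x-1)^(p+q-2) * (x^2 - 2*x) := by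
    have hpp : (x-1)^p * (x-1)^q = (x-1)^(p+q-2) * (x-1)^2 := by
      rw [← pow_add, ← pow_add]; congr 1; omega
    calc (x-1)^p * ((x-1)^q * (1 - ((x-1)*(x-1))⁻¹))
        = ((x-1)^p * (x-1)^q) * (1 - ((x-1)*(x-1))⁻¹) := by ring
      _ = (x-1)^(p+q-2) * ((x-1)^2 * (1 - ((x-1)*(x-1))⁻¹)) := by rw [hpp]; ring
      _ = (x-1)^(p+q-2) * (x^2 - 2*x) := by
          congr 1
          field_simp
          ring
  rw [mul_one, hexp]

/-- For `p + q = 2n` with `p, q ≥ 1`, the graphs `K_{n,n}` and `K_{p,q}` are cospectral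
with respect to the normalized Laplacian. -/
theorem stmt1 (n p q : ℕ) (hp : 1 ≤ p) (hq : 1 ≤ q) (hpq : p + q = 2 * n) :
    (normLap (completeBipartiteGraph (Fin n) (Fin n))).charpoly =
    (normLap (completeBipartiteGraph (Fin p) (Fin q))).charpoly := by
  have hn : 1 ≤ n := by omega
  apply Polynomial.eq_of_infinite_eval_eq
  refine Set.Infinite.mono ?_ (Set.Ioi_infinite (1:ℝ))
  intro x hx
  have hx1 : x ≠ 1 := ne_of_gt hx
  rw [Set.mem_setOf_eq, keyEval n n hn hn x hx1, keyEval p q hp hq x hx1]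
  congr 2
  omega
end

section
/- Let P be a bipartite graph with parts B and C (all edges between B and C, every vertex of positive degree). If x is an eigenvector of the normalized Laplacian for eigenvalue 1, write x = b + c where b is supported on B and c on C. Then b and c each satisfy \mathcal{L}b = b and \mathcal{L}c = c (whenever nonzero they are eigenvectors for eigenvalue 1). -/
open scoped Classical
lemma normLap_mulVec_apply {V : Type*} [Fintype V] (G : SimpleGraph V)
    (hdeg : ∀ v, 0 < G.degree v) (y : V → ℝ) (u : V) :
    (normLap G).mulVec y u =
      y u - (Real.sqrt (G.degree u))⁻¹ *
        ∑ v, (if G.Adj u v then (Real.sqrt (G.degree v))⁻¹ * y v else 0) := by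
  have hdu : Real.sqrt (G.degree u) * Real.sqrt (G.degree u) = (G.degree u : ℝ) :=
    Real.mul_self_sqrt (by positivity)
  have hs : Real.sqrt (G.degree u) ≠ 0 :=
    ne_of_gt (Real.sqrt_pos.mpr (by exact_mod_cast hdeg u))
  have hterm : ∀ v, normLap G u v * y v =
      (if u = v then y u else 0)
        - (Real.sqrt (G.degree u))⁻¹ *
            (if G.Adj u v then (Real.sqrt (G.degree v))⁻¹ * y v else 0) := by
    intro v
    by_cases h : u = v
    · subst h
      simp only [normLap, Matrix.mul_diagonal, Matrix.diagonal_mul, Matrix.sub_apply, degM, adjM,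
        Matrix.diagonal_apply_eq, SimpleGraph.irrefl, if_true, if_neg (G.irrefl), if_pos rfl]
      simp only [if_false, sub_zero, mul_zero]
      field_simp
      rw [sq, hdu]
    · simp only [normLap, Matrix.mul_diagonal, Matrix.diagonal_mul, Matrix.sub_apply, degM, adjM,
        Matrix.diagonal_apply_ne _ h, if_neg h]
      by_cases ha : G.Adj u v
      · simp only [if_pos ha]; ring
      · simp only [if_neg ha]; ring
  have hmv : (normLap G).mulVec y u = ∑ v, normLap G u v * y v := rfl
  rw [hmv]
  simp only [hterm]
  rw [Finset.sum_sub_distrib, ← Finset.mul_sum, Finset.sum_ite_eq]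
  simp

/-- In a bipartite graph with parts `B`, `C`, every vertex of positive degree, an eigenvector
of the normalized Laplacian for eigenvalue `1` splits as `x = b + c` with both pieces again
satisfying `ℒ b = b` and `ℒ c = c`. -/
theorem stmt3 {V : Type*} [Fintype V] (G : SimpleGraph V) (B C : Set V)
    (hBC : B ∪ C = Set.univ) (hdisj : Disjoint B C)
    (hbip : ∀ u v, G.Adj u v → (u ∈ B ∧ v ∈ C) ∨ (u ∈ C ∧ v ∈ B))
    (hdeg : ∀ v, 0 < G.degree v)
    (x : V → ℝ) (hx : x ≠ 0) (hev : (normLap G).mulVec x = x)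
    (b c : V → ℝ)
    (hb : b = fun v => if v ∈ B then x v else 0)
    (hc : c = fun v => if v ∈ C then x v else 0) :
    (normLap G).mulVec b = b ∧ (normLap G).mulVec c = c := by
  have hS : ∀ u, ∑ v, (if G.Adj u v then (Real.sqrt (G.degree v))⁻¹ * x v else 0) = 0 := by
    intro u
    have h1 := congrFun hev u
    rw [normLap_mulVec_apply G hdeg] at h1
    have hs : Real.sqrt (G.degree u) ≠ 0 :=
      ne_of_gt (Real.sqrt_pos.mpr (by exact_mod_cast hdeg u))
    have h2 : (Real.sqrt (G.degree u))⁻¹ *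
        ∑ v, (if G.Adj u v then (Real.sqrt (G.degree v))⁻¹ * x v else 0) = 0 := by
      linarith
    rcases mul_eq_zero.mp h2 with h | h
    · exact absurd h (inv_ne_zero hs)
    · exact h
  have key : ∀ (S : Set V) (y : V → ℝ), (y = fun v => if v ∈ S then x v else 0) →
      (∀ u v, G.Adj u v → (u ∈ S ∧ v ∉ S) ∨ (u ∉ S ∧ v ∈ S)) →
      (normLap G).mulVec y = y := by
    intro S y hy hSide
    funext u
    rw [normLap_mulVec_apply G hdeg]
    have hzero : ∑ v, (if G.Adj u v then (Real.sqrt (G.degree v))⁻¹ * y v else 0) = 0 := by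
      by_cases hu : u ∈ S
      · refine Finset.sum_eq_zero fun v _ => ?_
        by_cases h : G.Adj u v
        · rcases hSide u v h with ⟨_, hv⟩ | ⟨hu', _⟩
          · simp [h, hy, hv]
          · exact absurd hu hu'
        · simp [h]
      · have heq : (∑ v, (if G.Adj u v then (Real.sqrt (G.degree v))⁻¹ * y v else 0))
            = ∑ v, (if G.Adj u v then (Real.sqrt (G.degree v))⁻¹ * x v else 0) := by
          refine Finset.sum_congr rfl fun v _ => ?_
          by_cases h : G.Adj u v
          · rcases hSide u v h with ⟨hu', _⟩ | ⟨_, hv⟩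
            · exact absurd hu' hu
            · simp [h, hy, hv]
          · simp [h]
        rw [heq]; exact hS u
    rw [hzero, mul_zero, sub_zero]
  constructor
  · refine key B b hb fun u v h => ?_
    rcases hbip u v h with ⟨hu, hv⟩ | ⟨hu, hv⟩
    · exact Or.inl ⟨hu, Set.disjoint_right.mp hdisj hv⟩
    · exact Or.inr ⟨Set.disjoint_right.mp hdisj hu, hv⟩
  · refine key C c hc fun u v h => ?_
    rcases hbip u v h with ⟨hu, hv⟩ | ⟨hu, hv⟩
    · exact Or.inr ⟨Set.disjoint_left.mp hdisj hu, hv⟩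
    · exact Or.inl ⟨hu, Set.disjoint_left.mp hdisj hv⟩
end

section
/- Let P₁ and P₂ be (k,ℓ)-biregular bipartite graphs on vertex set B ∪ C that are cospectral with respect to the adjacency matrix, such that the dimension of the kernel of the adjacency matrix intersected with the subspace of vectors supported on B is the same for both. Let G₁ and G₂ be the graphs obtained by attaching: an arbitrary graph on A ∪ A', a complete bipartite graph between A' and B, no edges inside B or C, no other edges to B ∪ C, and P₁ (respectively P₂) between B and C. Then for every real t, G₁ and G₂ are cospectral with respect to the matrix A + tD. -/
open scoped Classical
section Aux

open Polynomial Matrix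

theorem aux_eval₂_charpoly {n : Type*} [Fintype n] [DecidableEq n] {F : Type*} [Field F]
    (φ : ℝ →+* F) (c : F) (M : Matrix n n ℝ) :
    Polynomial.eval₂ φ c M.charpoly = Matrix.det (c • (1 : Matrix n n F) - M.map φ) := by
  rw [Matrix.charpoly, ← Polynomial.coe_eval₂RingHom, RingHom.map_det]
  congr 1
  ext i j
  by_cases h : i = j
  · subst h
    simp [Matrix.charmatrix_apply_eq, Matrix.one_apply, Matrix.smul_apply]
  · simp [Matrix.charmatrix_apply_ne _ _ _ h, Matrix.one_apply_ne h, Matrix.smul_apply, h]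

theorem aux_outer {B X F : Type*} [Fintype B] [DecidableEq B] [Fintype X] [Field F]
    (T : Matrix B B F) [Invertible T] (σ : F) (hσ : σ ≠ 0)
    (hT : T *ᵥ (fun _ => 1) = σ • ((fun _ => 1) : B → F)) (s : X → F) :
    vecMulVec s ((fun _ => 1) : B → F) * ⅟T * vecMulVec ((fun _ => 1) : B → F) s
      = (σ⁻¹ * (Fintype.card B : F)) • vecMulVec s s := by
  have h1 : ⅟T *ᵥ (fun _ => (1:F)) = σ⁻¹ • ((fun _ => 1) : B → F) := by
    have h2 : ⅟T *ᵥ (T *ᵥ (σ⁻¹ • ((fun _ => 1) : B → F))) = σ⁻¹ • ((fun _ => 1) : B → F) := by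
      rw [Matrix.mulVec_mulVec, invOf_mul_self, Matrix.one_mulVec]
    rw [Matrix.mulVec_smul, hT] at h2
    rw [← h2, smul_smul, inv_mul_cancel₀ hσ, one_smul]
  ext x y
  have hrow : ∀ b : B, ∑ b' : B, ⅟T b b' = σ⁻¹ := by
    intro b
    have := congrFun h1 b
    simpa [Matrix.mulVec, dotProduct] using this
  simp only [Matrix.mul_apply, Matrix.vecMulVec_apply, Matrix.smul_apply, smul_eq_mul]
  calc ∑ b' : B, (∑ b : B, (s x * 1) * ⅟T b b') * (1 * s y)
      = s x * s y * ∑ b : B, ∑ b' : B, ⅟T b b' := by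
        erw [Finset.sum_comm]
        rw [Finset.mul_sum]
        refine Finset.sum_congr rfl fun b' _ => ?_
        rw [Finset.sum_mul, Finset.mul_sum]
        refine Finset.sum_congr rfl fun b _ => ?_
        ring
    _ = σ⁻¹ * (Fintype.card B : F) * (s x * s y) := by
        rw [Finset.sum_congr rfl (fun b _ => hrow b), Finset.sum_const, Finset.card_univ,
          nsmul_eq_mul, Fintype.card]
        ring

theorem pipeline {Xt Bt Ct F : Type*} [Fintype Xt] [Fintype Bt] [Fintype Ct]
    [DecidableEq Xt] [DecidableEq Bt] [DecidableEq Ct] [Field F]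
    (φ : ℝ →+* F) (N : Matrix Bt Ct ℝ) (E : Matrix Xt Xt F) (s : Xt → F)
    (a c μ : F) (hc : c ≠ 0) (hacμ : a * c - μ ≠ 0)
    (hM : ((N * Nᵀ).map φ) *ᵥ ((fun _ => 1) : Bt → F) = μ • ((fun _ => 1) : Bt → F))
    (hW : Polynomial.eval₂ φ (a * c) (N * Nᵀ).charpoly ≠ 0) :
    (Matrix.fromBlocks
      (Matrix.fromBlocks E (-(Matrix.vecMulVec s ((fun _ => 1) : Bt → F)))
        (-(Matrix.vecMulVec ((fun _ => 1) : Bt → F) s)) (a • 1))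
      (Matrix.fromRows (0 : Matrix Xt Ct F) (-(N.map φ)))
      (Matrix.fromCols (0 : Matrix Ct Xt F) (-(Nᵀ.map φ)))
      (c • (1 : Matrix Ct Ct F))).det
    = c ^ (Fintype.card Ct) * (c⁻¹) ^ (Fintype.card Bt) *
        Polynomial.eval₂ φ (a * c) (N * Nᵀ).charpoly *
        (E - (((a - c⁻¹ * μ)⁻¹) * (Fintype.card Bt : F)) • Matrix.vecMulVec s s).det := by
  have h1 : (c⁻¹ • (1 : Matrix Ct Ct F)) * (c • 1) = 1 := by
    rw [Matrix.smul_mul, Matrix.mul_smul, smul_smul, inv_mul_cancel₀ hc, one_smul, one_mul]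
  have h2 : (c • (1 : Matrix Ct Ct F)) * (c⁻¹ • 1) = 1 := by
    rw [Matrix.smul_mul, Matrix.mul_smul, smul_smul, mul_inv_cancel₀ hc, one_smul, one_mul]
  letI instC : Invertible (c • (1 : Matrix Ct Ct F)) := ⟨c⁻¹ • 1, h1, h2⟩
  have hinvC : ⅟(c • (1 : Matrix Ct Ct F)) = c⁻¹ • 1 := rfl
  rw [Matrix.det_fromBlocks₂₂, hinvC]
  have hQQ : Matrix.fromRows (0 : Matrix Xt Ct F) (-(N.map φ)) * (c⁻¹ • (1 : Matrix Ct Ct F)) *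
      Matrix.fromCols (0 : Matrix Ct Xt F) (-(Nᵀ.map φ))
      = c⁻¹ • Matrix.fromBlocks (0 : Matrix Xt Xt F) (0 : Matrix Xt Bt F) (0 : Matrix Bt Xt F)
        ((N * Nᵀ).map φ) := by
    rw [Matrix.mul_smul, Matrix.mul_one, Matrix.smul_mul]
    rw [Matrix.fromRows_mul_fromCols]
    congr 1
    have : (-(N.map φ)) * (-(Nᵀ.map φ)) = (N * Nᵀ).map φ := by
      rw [Matrix.neg_mul, Matrix.mul_neg, neg_neg]
      ext i j
      simp [Matrix.mul_apply, Matrix.map_apply, map_sum]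
    simp [this]
  rw [hQQ]
  set M' : Matrix Bt Bt F := (N * Nᵀ).map φ with hM'
  have hblocksub : Matrix.fromBlocks E (-(Matrix.vecMulVec s ((fun _ => 1) : Bt → F)))
        (-(Matrix.vecMulVec ((fun _ => 1) : Bt → F) s)) (a • 1) -
        c⁻¹ • Matrix.fromBlocks (0 : Matrix Xt Xt F) (0 : Matrix Xt Bt F) (0 : Matrix Bt Xt F) M'
      = Matrix.fromBlocks E (-(Matrix.vecMulVec s ((fun _ => 1) : Bt → F)))
        (-(Matrix.vecMulVec ((fun _ => 1) : Bt → F) s)) (a • 1 - c⁻¹ • M') := by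
    rw [Matrix.fromBlocks_smul, sub_eq_add_neg, Matrix.fromBlocks_neg, Matrix.fromBlocks_add]
    simp [sub_eq_add_neg]
  rw [hblocksub]
  set T : Matrix Bt Bt F := a • 1 - c⁻¹ • M' with hT
  set W : Matrix Bt Bt F := (a * c) • 1 - M' with hWdef
  have hTW : T = c⁻¹ • W := by
    rw [hT, hWdef, smul_sub, smul_smul, mul_comm a c, inv_mul_cancel_left₀ hc]
  have hdetW : W.det = Polynomial.eval₂ φ (a * c) (N * Nᵀ).charpoly := by
    rw [aux_eval₂_charpoly]
  have hdetT : T.det = (c⁻¹) ^ (Fintype.card Bt) * W.det := by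
    rw [hTW, Matrix.det_smul]
  have hdetTne : T.det ≠ 0 := by
    rw [hdetT, hdetW]
    exact mul_ne_zero (pow_ne_zero _ (inv_ne_zero hc)) hW
  letI instT : Invertible T := Matrix.invertibleOfIsUnitDet T (Ne.isUnit hdetTne)
  rw [Matrix.det_fromBlocks₂₂]
  set σ : F := a - c⁻¹ * μ with hσdef
  have hσc : c * σ = a * c - μ := by
    rw [hσdef, mul_sub, mul_comm c a, mul_inv_cancel_left₀ hc]
  have hσne : σ ≠ 0 := by
    intro h
    apply hacμ
    rw [← hσc, h, mul_zero]
  have hTones : T *ᵥ ((fun _ => 1) : Bt → F) = σ • ((fun _ => 1) : Bt → F) := by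
    rw [hT, Matrix.sub_mulVec, Matrix.smul_mulVec, Matrix.one_mulVec,
      Matrix.smul_mulVec, hM, hσdef, sub_smul, smul_smul]
  have houter : -(Matrix.vecMulVec s ((fun _ => 1) : Bt → F)) * ⅟T *
        -(Matrix.vecMulVec ((fun _ => 1) : Bt → F) s)
      = (σ⁻¹ * (Fintype.card Bt : F)) • Matrix.vecMulVec s s := by
    simp only [Matrix.neg_mul, Matrix.mul_neg, neg_neg]
    exact aux_outer T σ hσne hTones s
  rw [houter, hdetT, hdetW, Matrix.det_smul, Matrix.det_one, mul_one]
  ring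

theorem aux_quad_natDegree (a' b' : ℝ) : ((X - C a') * (X - C b') : ℝ[X]).natDegree = 2 := by
  rw [Polynomial.natDegree_mul (Polynomial.X_sub_C_ne_zero a') (Polynomial.X_sub_C_ne_zero b'),
    Polynomial.natDegree_X_sub_C, Polynomial.natDegree_X_sub_C]

theorem aux_quad_sub_ne (a' b' m : ℝ) : ((X - C a') * (X - C b') - C m : ℝ[X]) ≠ 0 := by
  intro h
  have h2 : ((X - C a') * (X - C b') : ℝ[X]) = C m := by linear_combination h
  have := aux_quad_natDegree a' b'
  rw [h2, Polynomial.natDegree_C] at this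
  omega

theorem aux_quad_ne_C (a' b' : ℝ) (m : ℝ) : ((X - C a') * (X - C b') : ℝ[X]) ≠ C m := by
  intro h
  have := aux_quad_natDegree a' b'
  rw [h, Polynomial.natDegree_C] at this
  omega

theorem aux_comp_ne_zero (χ : ℝ[X]) (hχ : χ.Monic) (a' b' : ℝ) :
    χ.comp ((X - C a') * (X - C b')) ≠ 0 := by
  rw [Ne, Polynomial.comp_eq_zero_iff]
  push_neg
  refine ⟨hχ.ne_zero, fun _ => aux_quad_ne_C a' b' _⟩

theorem aux_psi_comp {F : Type*} [Field F] [Algebra ℝ[X] F] (p u : ℝ[X]) :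
    Polynomial.eval₂ ((algebraMap ℝ[X] F).comp Polynomial.C) (algebraMap ℝ[X] F u) p
      = algebraMap ℝ[X] F (p.comp u) := by
  rw [Polynomial.comp, Polynomial.hom_eval₂]

theorem aux_comp_sq_inj (p q : ℝ[X]) (h : p.comp (X * X) = q.comp (X * X)) : p = q := by
  apply Polynomial.eq_of_infinite_eval_eq
  apply Set.Infinite.mono (s := Set.Ici (0:ℝ))
  · intro x hx
    have hs : x = Real.sqrt x * Real.sqrt x := (Real.mul_self_sqrt hx).symm
    have := congrArg (Polynomial.eval (Real.sqrt x)) h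
    simp only [Polynomial.eval_comp, Polynomial.eval_mul, Polynomial.eval_X] at this
    simp only [Set.mem_setOf_eq]
    rw [hs]
    exact this
  · exact Set.Ici_infinite 0

theorem aux_charmap {n : Type*} [Fintype n] [DecidableEq n] {F : Type*} [Field F]
    (ψ : Polynomial ℝ →+* F) (M : Matrix n n ℝ) (i j : n) :
    ((Matrix.charmatrix M).map ψ) i j
      = (if i = j then ψ Polynomial.X else 0) - (ψ.comp Polynomial.C) (M i j) := by
  by_cases h : i = j
  · subst h; simp [Matrix.charmatrix_apply_eq]
  · simp [Matrix.charmatrix_apply_ne _ _ _ h, h]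

/-- The ambient field of rational functions. -/
noncomputable abbrev FF : Type := FractionRing (Polynomial ℝ)

noncomputable abbrev ψF : Polynomial ℝ →+* FF := algebraMap (Polynomial ℝ) FF

noncomputable abbrev φF : ℝ →+* FF := ψF.comp Polynomial.C

theorem ψF_inj : Function.Injective ψF := IsFractionRing.injective (Polynomial ℝ) FF

theorem xB_ne : ψF Polynomial.X ≠ 0 := by
  intro h
  exact Polynomial.X_ne_zero (ψF_inj (h.trans (map_zero ψF).symm))

end Aux

set_option maxHeartbeats 4000000 in
open Matrix Polynomial in
/-- Biregular bipartite swapping: if `P₁`, `P₂` are `(k,ℓ)`-biregular bipartite graphs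
between `B` and `C`, cospectral for the adjacency matrix, with equal dimensions of the
adjacency kernel intersected with the vectors supported on `B`, then the attached graphs
`G₁`, `G₂` are cospectral with respect to `A + tD` for every real `t`. -/
theorem stmt11 {V : Type*} [Fintype V] (SA SA' SB SC : Set V)
    (hd1 : Disjoint SA SA') (hd2 : Disjoint SA SB) (hd3 : Disjoint SA SC)
    (hd4 : Disjoint SA' SB) (hd5 : Disjoint SA' SC) (hd6 : Disjoint SB SC)
    (hcover : SA ∪ SA' ∪ SB ∪ SC = Set.univ)
    (k l : ℕ) (hk : 1 ≤ k) (hl : 1 ≤ l)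
    (P₁ P₂ : SimpleGraph V)
    (hP₁bip : ∀ u v, P₁.Adj u v → (u ∈ SB ∧ v ∈ SC) ∨ (u ∈ SC ∧ v ∈ SB))
    (hP₂bip : ∀ u v, P₂.Adj u v → (u ∈ SB ∧ v ∈ SC) ∨ (u ∈ SC ∧ v ∈ SB))
    (hP₁degB : ∀ v ∈ SB, P₁.degree v = k) (hP₁degC : ∀ v ∈ SC, P₁.degree v = l)
    (hP₂degB : ∀ v ∈ SB, P₂.degree v = k) (hP₂degC : ∀ v ∈ SC, P₂.degree v = l)
    (hPcospec : (adjM P₁).charpoly = (adjM P₂).charpoly)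
    (hdim : Module.finrank ℝ
        ↥(LinearMap.ker (adjM P₁).mulVecLin ⊓
          ⨅ v ∈ SBᶜ, LinearMap.ker (LinearMap.proj v : (V → ℝ) →ₗ[ℝ] ℝ)) =
      Module.finrank ℝ
        ↥(LinearMap.ker (adjM P₂).mulVecLin ⊓
          ⨅ v ∈ SBᶜ, LinearMap.ker (LinearMap.proj v : (V → ℝ) →ₗ[ℝ] ℝ)))
    (H : SimpleGraph V)
    (hH : ∀ u v, H.Adj u v → u ∈ SA ∪ SA' ∧ v ∈ SA ∪ SA')
    (G₁ G₂ : SimpleGraph V)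
    (hG₁ : ∀ u v, G₁.Adj u v ↔
      H.Adj u v ∨ (u ∈ SA' ∧ v ∈ SB) ∨ (u ∈ SB ∧ v ∈ SA') ∨ P₁.Adj u v)
    (hG₂ : ∀ u v, G₂.Adj u v ↔
      H.Adj u v ∨ (u ∈ SA' ∧ v ∈ SB) ∨ (u ∈ SB ∧ v ∈ SA') ∨ P₂.Adj u v) :
    ∀ t : ℝ, (adjM G₁ + t • degM G₁).charpoly = (adjM G₂ + t • degM G₂).charpoly := by
  intro t
  classical
  set SX : Set V := SA ∪ SA' with hSXdef
  have hXB : Disjoint SX SB := hd2.union_left hd4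
  have hXC : Disjoint SX SC := hd3.union_left hd5
  -- the reindexing bijection
  set f : ((↥SX ⊕ ↥SB) ⊕ ↥SC) → V :=
    Sum.elim (Sum.elim (fun x => ↑x) (fun b => ↑b)) (fun c => ↑c) with hfdef
  have hbij : Function.Bijective f := by
    constructor
    · rintro ((x | b) | c) ((x' | b') | c') h <;>
        simp only [hfdef, Sum.elim_inl, Sum.elim_inr] at h
      · exact congrArg _ (congrArg _ (Subtype.ext h))
      · exfalso; exact Set.disjoint_left.mp hXB x.2 (by rw [h]; exact b'.2)
      · exfalso; exact Set.disjoint_left.mp hXC x.2 (by rw [h]; exact c'.2)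
      · exfalso; exact Set.disjoint_left.mp hXB x'.2 (by rw [← h]; exact b.2)
      · exact congrArg _ (congrArg _ (Subtype.ext h))
      · exfalso; exact Set.disjoint_left.mp hd6 b.2 (by rw [h]; exact c'.2)
      · exfalso; exact Set.disjoint_left.mp hXC x'.2 (by rw [← h]; exact c.2)
      · exfalso; exact Set.disjoint_left.mp hd6 b'.2 (by rw [← h]; exact c.2)
      · exact congrArg _ (Subtype.ext h)
    · intro v
      have hv : v ∈ ((SA ∪ SA') ∪ SB) ∪ SC := by
        have := Set.mem_univ v
        rw [← hcover] at this
        exact this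
      rcases hv with (hx | hb) | hc
      · exact ⟨Sum.inl (Sum.inl ⟨v, hx⟩), rfl⟩
      · exact ⟨Sum.inl (Sum.inr ⟨v, hb⟩), rfl⟩
      · exact ⟨Sum.inr ⟨v, hc⟩, rfl⟩
  set eqv : ((↥SX ⊕ ↥SB) ⊕ ↥SC) ≃ V := Equiv.ofBijective f hbij with heqv
  -- scalars
  set xB : FF := ψF Polynomial.X with hxBdef
  have hxB : xB ≠ 0 := xB_ne
  set dN : ℕ := SA'.toFinset.card + k with hdN
  set aG : FF := xB - φF (t * (dN : ℝ)) with haG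
  set cG : FF := xB - φF (t * (l : ℝ)) with hcG
  set μF : FF := φF ((k : ℝ) * (l : ℝ)) with hμF
  have haGeq : aG = ψF (Polynomial.X - Polynomial.C (t * (dN : ℝ))) := by
    rw [haG, map_sub]; rfl
  have hcGeq : cG = ψF (Polynomial.X - Polynomial.C (t * (l : ℝ))) := by
    rw [hcG, map_sub]; rfl
  have hcGne : cG ≠ 0 := by
    rw [hcGeq]
    intro h
    exact Polynomial.X_sub_C_ne_zero _ (ψF_inj (h.trans (map_zero ψF).symm))
  -- matrices
  set NN : SimpleGraph V → Matrix ↥SB ↥SC ℝ :=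
    fun P => Matrix.of fun b c => if P.Adj ↑b ↑c then (1:ℝ) else 0 with hNN
  set EE : SimpleGraph V → Matrix ↥SX ↥SX FF :=
    fun G => Matrix.of fun x x' =>
      (if x = x' then xB else 0) - φF ((adjM G + t • degM G) ↑x ↑x') with hEE
  set sF : ↥SX → FF := fun x => if (↑x : V) ∈ SA' then 1 else 0 with hsF
  set wB : FF := (aG - cG⁻¹ * μF)⁻¹ * (Fintype.card ↥SB : FF) with hwB
  -- generic facts for one pair (P, G)
  have main : ∀ (P G : SimpleGraph V),
      (∀ u v, P.Adj u v → (u ∈ SB ∧ v ∈ SC) ∨ (u ∈ SC ∧ v ∈ SB)) →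
      (∀ v ∈ SB, P.degree v = k) → (∀ v ∈ SC, P.degree v = l) →
      (∀ u v, G.Adj u v ↔ H.Adj u v ∨ (u ∈ SA' ∧ v ∈ SB) ∨ (u ∈ SB ∧ v ∈ SA') ∨ P.Adj u v) →
      ψF ((adjM G + t • degM G).charpoly)
        = cG ^ Fintype.card ↥SC * (cG⁻¹) ^ Fintype.card ↥SB *
          Polynomial.eval₂ φF (aG * cG) (NN P * (NN P)ᵀ).charpoly *
          ((EE G) - wB • Matrix.vecMulVec sF sF).det
      ∧ ψF ((adjM P).charpoly)
        = xB ^ Fintype.card ↥SC * (xB⁻¹) ^ Fintype.card ↥SB *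
          Polynomial.eval₂ φF (xB * xB) (NN P * (NN P)ᵀ).charpoly * xB ^ Fintype.card ↥SX := by
    intro P G hbip hdegB hdegC hG
    -- bipartite structure facts
    have hPB : ∀ u v, P.Adj u v → u ∈ SB → v ∈ SC := by
      intro u v h hu
      rcases hbip u v h with ⟨_, h2⟩ | ⟨h1, _⟩
      · exact h2
      · exact (Set.disjoint_left.mp hd6 hu h1).elim
    have hPC : ∀ u v, P.Adj u v → u ∈ SC → v ∈ SB := by
      intro u v h hu
      rcases hbip u v h with ⟨h1, _⟩ | ⟨_, h2⟩
      · exact (Set.disjoint_left.mp hd6 h1 hu).elim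
      · exact h2
    have hPnX : ∀ u v, u ∈ SX → ¬P.Adj u v := by
      intro u v hu h
      rcases hbip u v h with ⟨h1, _⟩ | ⟨h1, _⟩
      · exact Set.disjoint_left.mp hXB hu h1
      · exact Set.disjoint_left.mp hXC hu h1
    -- adjacency of G on blocks
    have hGbb : ∀ b b' : ↥SB, ¬G.Adj ↑b ↑b' := by
      rintro b b' h
      rcases (hG _ _).mp h with h | ⟨h1, _⟩ | ⟨_, h2⟩ | h
      · exact Set.disjoint_right.mp hXB b.2 (hH _ _ h).1
      · exact Set.disjoint_left.mp hd4 h1 b.2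
      · exact Set.disjoint_left.mp hd4 h2 b'.2
      · exact Set.disjoint_left.mp hd6 b'.2 (hPB _ _ h b.2)
    have hGcc : ∀ c c' : ↥SC, ¬G.Adj ↑c ↑c' := by
      rintro c c' h
      rcases (hG _ _).mp h with h | ⟨h1, _⟩ | ⟨h1, _⟩ | h
      · exact Set.disjoint_right.mp hXC c.2 (hH _ _ h).1
      · exact Set.disjoint_left.mp hd5 h1 c.2
      · exact Set.disjoint_left.mp hd6 h1 c.2
      · exact Set.disjoint_left.mp hd6 (hPC _ _ h c.2) c'.2
    have hGxc : ∀ x : ↥SX, ∀ c : ↥SC, ¬G.Adj ↑x ↑c := by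
      rintro x c h
      rcases (hG _ _).mp h with h | ⟨_, h2⟩ | ⟨h1, _⟩ | h
      · exact Set.disjoint_right.mp hXC c.2 (hH _ _ h).2
      · exact Set.disjoint_left.mp hd6 h2 c.2
      · exact Set.disjoint_left.mp hXB x.2 h1
      · exact hPnX _ _ x.2 h
    have hGcx : ∀ c : ↥SC, ∀ x : ↥SX, ¬G.Adj ↑c ↑x := by
      rintro c x h
      rcases (hG _ _).mp h with h | ⟨h1, _⟩ | ⟨h1, _⟩ | h
      · exact Set.disjoint_right.mp hXC c.2 (hH _ _ h).1
      · exact Set.disjoint_left.mp hd5 h1 c.2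
      · exact Set.disjoint_left.mp hd6 h1 c.2
      · exact Set.disjoint_left.mp hXB x.2 (hPC _ _ h c.2)
    have hGbc : ∀ b : ↥SB, ∀ c : ↥SC, G.Adj ↑b ↑c ↔ P.Adj ↑b ↑c := by
      intro b c
      constructor
      · intro h
        rcases (hG _ _).mp h with h | ⟨h1, _⟩ | ⟨_, h2⟩ | h
        · exact (Set.disjoint_right.mp hXB b.2 (hH _ _ h).1).elim
        · exact (Set.disjoint_left.mp hd4 h1 b.2).elim
        · exact (Set.disjoint_left.mp hd5 h2 c.2).elim
        · exact h
      · intro h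
        exact (hG _ _).mpr (Or.inr (Or.inr (Or.inr h)))
    have hGxb : ∀ x : ↥SX, ∀ b : ↥SB, G.Adj ↑x ↑b ↔ (↑x : V) ∈ SA' := by
      intro x b
      constructor
      · intro h
        rcases (hG _ _).mp h with h | ⟨h1, _⟩ | ⟨h1, _⟩ | h
        · exact (Set.disjoint_right.mp hXB b.2 (hH _ _ h).2).elim
        · exact h1
        · exact (Set.disjoint_left.mp hXB x.2 h1).elim
        · exact (hPnX _ _ x.2 h).elim
      · intro h
        exact (hG _ _).mpr (Or.inr (Or.inl ⟨h, b.2⟩))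
    -- degrees of G on SB and SC
    have hdegBG : ∀ b : ↥SB, G.degree ↑b = dN := by
      intro b
      have hnb : G.neighborFinset ↑b = SA'.toFinset ∪ P.neighborFinset ↑b := by
        ext v
        simp only [SimpleGraph.mem_neighborFinset, Finset.mem_union, Set.mem_toFinset]
        rw [hG]
        constructor
        · rintro (h | ⟨h1, _⟩ | ⟨_, h2⟩ | h)
          · exact (Set.disjoint_right.mp hXB b.2 (hH _ _ h).1).elim
          · exact (Set.disjoint_left.mp hd4 h1 b.2).elim
          · exact Or.inl h2
          · exact Or.inr h
        · rintro (h | h)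
          · exact Or.inr (Or.inr (Or.inl ⟨b.2, h⟩))
          · exact Or.inr (Or.inr (Or.inr h))
      have hdisj : Disjoint SA'.toFinset (P.neighborFinset ↑b) := by
        rw [Finset.disjoint_left]
        intro v hv1 hv2
        rw [Set.mem_toFinset] at hv1
        rw [SimpleGraph.mem_neighborFinset] at hv2
        exact Set.disjoint_left.mp hd5 hv1 (hPB _ _ hv2 b.2)
      show (G.neighborFinset ↑b).card = dN
      rw [hnb, Finset.card_union_of_disjoint hdisj, hdN]
      congr 1
      exact hdegB ↑b b.2
    have hdegCG : ∀ c : ↥SC, G.degree ↑c = l := by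
      intro c
      have hnc : G.neighborFinset ↑c = P.neighborFinset ↑c := by
        ext v
        simp only [SimpleGraph.mem_neighborFinset]
        rw [hG]
        constructor
        · rintro (h | ⟨h1, _⟩ | ⟨h1, _⟩ | h)
          · exact (Set.disjoint_right.mp hXC c.2 (hH _ _ h).1).elim
          · exact (Set.disjoint_left.mp hd5 h1 c.2).elim
          · exact (Set.disjoint_left.mp hd6 h1 c.2).elim
          · exact h
        · exact fun h => Or.inr (Or.inr (Or.inr h))
      show (G.neighborFinset ↑c).card = l
      rw [hnc]
      exact hdegC ↑c c.2
    -- row and column sums of the biadjacency matrix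
    have hrow : ∀ b : ↥SB, ∑ c : ↥SC, NN P b c = (k : ℝ) := by
      intro b
      have h1 : ∑ v ∈ SC.toFinset, (if P.Adj ↑b v then (1:ℝ) else 0)
          = ∑ c : ↥SC, NN P b c := by
        rw [Finset.sum_subtype SC.toFinset (fun x => Set.mem_toFinset)
          (fun v => if P.Adj ↑b v then (1:ℝ) else 0)]
        rfl
      have h2 : ∑ v ∈ Finset.univ, (if P.Adj ↑b v then (1:ℝ) else 0)
          = ∑ v ∈ SC.toFinset, (if P.Adj ↑b v then (1:ℝ) else 0) := by
        refine (Finset.sum_subset (Finset.subset_univ _) ?_).symm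
        intro v _ hv
        rw [Set.mem_toFinset] at hv
        rw [if_neg]
        intro hadj
        exact hv (hPB _ _ hadj b.2)
      have h3 : ∑ v ∈ Finset.univ, (if P.Adj ↑b v then (1:ℝ) else 0) = (P.degree ↑b : ℝ) := by
        rw [Finset.sum_boole]
        congr 1
        rw [SimpleGraph.degree, SimpleGraph.neighborFinset_eq_filter]
      rw [← h1, ← h2, h3, hdegB ↑b b.2]
    have hcol : ∀ c : ↥SC, ∑ b : ↥SB, NN P b c = (l : ℝ) := by
      intro c
      have h1 : ∑ v ∈ SB.toFinset, (if P.Adj v ↑c then (1:ℝ) else 0)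
          = ∑ b : ↥SB, NN P b c := by
        rw [Finset.sum_subtype SB.toFinset (fun x => Set.mem_toFinset)
          (fun v => if P.Adj v ↑c then (1:ℝ) else 0)]
        rfl
      have h2 : ∑ v ∈ Finset.univ, (if P.Adj v ↑c then (1:ℝ) else 0)
          = ∑ v ∈ SB.toFinset, (if P.Adj v ↑c then (1:ℝ) else 0) := by
        refine (Finset.sum_subset (Finset.subset_univ _) ?_).symm
        intro v _ hv
        rw [Set.mem_toFinset] at hv
        rw [if_neg]
        intro hadj
        exact hv (hPC _ _ (hadj.symm) c.2)
      have h3 : ∑ v ∈ Finset.univ, (if P.Adj v ↑c then (1:ℝ) else 0) = (P.degree ↑c : ℝ) := by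
        rw [Finset.sum_congr rfl (fun v _ => by rw [SimpleGraph.adj_comm]), Finset.sum_boole]
        congr 1
        rw [SimpleGraph.degree, SimpleGraph.neighborFinset_eq_filter]
      rw [← h1, ← h2, h3, hdegC ↑c c.2]
    -- the all-ones vector is an eigenvector of N Nᵀ
    have hMeigR : (NN P * (NN P)ᵀ) *ᵥ ((fun _ => 1) : ↥SB → ℝ)
        = ((k : ℝ) * (l : ℝ)) • ((fun _ => 1) : ↥SB → ℝ) := by
      funext b
      simp only [Matrix.mulVec, dotProduct, Matrix.mul_apply, Matrix.transpose_apply,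
        mul_one, Pi.smul_apply, smul_eq_mul]
      rw [Finset.sum_comm]
      calc ∑ c : ↥SC, ∑ b' : ↥SB, NN P b c * NN P b' c
          = ∑ c : ↥SC, NN P b c * (l : ℝ) := by
            refine Finset.sum_congr rfl fun c _ => ?_
            rw [← Finset.mul_sum, hcol c]
        _ = (k : ℝ) * (l : ℝ) := by
            rw [← Finset.sum_mul, hrow b]
    have hMeigF : ((NN P * (NN P)ᵀ).map φF) *ᵥ ((fun _ => 1) : ↥SB → FF)
        = μF • ((fun _ => 1) : ↥SB → FF) := by
      funext b
      have h0 : ((NN P * (NN P)ᵀ).map φF *ᵥ ((fun _ => 1) : ↥SB → FF)) b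
          = φF (((NN P * (NN P)ᵀ) *ᵥ ((fun _ => 1) : ↥SB → ℝ)) b) := by
        rw [RingHom.map_mulVec]
        congr 1
        funext v
        simp
      rw [h0, hMeigR]
      simp [hμF]
    -- nonvanishing facts
    have hacG : aG * cG = ψF ((Polynomial.X - Polynomial.C (t * (dN : ℝ))) *
        (Polynomial.X - Polynomial.C (t * (l : ℝ)))) := by
      rw [haGeq, hcGeq, ← _root_.map_mul]
    have hμψ : μF = ψF (Polynomial.C ((k : ℝ) * (l : ℝ))) := rfl
    have hacμG : aG * cG - μF ≠ 0 := by
      rw [hacG, hμψ, ← map_sub]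
      intro h
      exact aux_quad_sub_ne _ _ _ (ψF_inj (h.trans (map_zero ψF).symm))
    have hWG : Polynomial.eval₂ φF (aG * cG) (NN P * (NN P)ᵀ).charpoly ≠ 0 := by
      rw [hacG, aux_psi_comp]
      intro h
      exact aux_comp_ne_zero _ (Matrix.charpoly_monic _) _ _
        (ψF_inj (h.trans (map_zero ψF).symm))
    have hXXψ : xB * xB = ψF (Polynomial.X * Polynomial.X) := by
      rw [hxBdef, _root_.map_mul]
    have hXX0 : (Polynomial.X * Polynomial.X : Polynomial ℝ)
        = (Polynomial.X - Polynomial.C 0) * (Polynomial.X - Polynomial.C 0) := by simp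
    have hacμP : xB * xB - μF ≠ 0 := by
      rw [hXXψ, hμψ, ← map_sub]
      intro h
      have := ψF_inj (h.trans (map_zero ψF).symm)
      rw [hXX0] at this
      exact aux_quad_sub_ne 0 0 _ this
    have hWP : Polynomial.eval₂ φF (xB * xB) (NN P * (NN P)ᵀ).charpoly ≠ 0 := by
      rw [hXXψ, aux_psi_comp]
      intro h
      have := ψF_inj (h.trans (map_zero ψF).symm)
      rw [hXX0] at this
      exact aux_comp_ne_zero _ (Matrix.charpoly_monic _) 0 0 this
    -- entries of the shifted adjacency matrix
    set Mv : Matrix V V ℝ := adjM G + t • degM G with hMvdef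
    have hMvE : ∀ u v, Mv u v
        = (if G.Adj u v then (1:ℝ) else 0) + (if u = v then t * (G.degree u : ℝ) else 0) := by
      intro u v
      simp only [hMvdef, Matrix.add_apply, Matrix.smul_apply, adjM, degM,
        Matrix.diagonal_apply, smul_eq_mul, mul_ite, mul_zero]
    -- the block shape of the mapped charmatrix of G
    have hshapeG : (Matrix.charmatrix (Mv.submatrix f f)).map ψF
        = Matrix.fromBlocks
            (Matrix.fromBlocks (EE G) (-(Matrix.vecMulVec sF ((fun _ => 1) : ↥SB → FF)))
              (-(Matrix.vecMulVec ((fun _ => 1) : ↥SB → FF) sF)) (aG • 1))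
            (Matrix.fromRows (0 : Matrix ↥SX ↥SC FF) (-((NN P).map φF)))
            (Matrix.fromCols (0 : Matrix ↥SC ↥SX FF) (-(((NN P)ᵀ).map φF)))
            (cG • (1 : Matrix ↥SC ↥SC FF)) := by
      ext i j
      rw [aux_charmap ψF (Mv.submatrix f f) i j]
      rcases i with (x | b) | c <;> rcases j with (x' | b') | c'
      -- XX block
      · simp [Matrix.submatrix_apply, hfdef, Sum.elim_inl, Sum.elim_inr,
          Matrix.fromBlocks_apply₁₁, Matrix.fromBlocks_apply₁₂, Matrix.fromBlocks_apply₂₁,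
          Matrix.fromBlocks_apply₂₂, Matrix.fromRows_apply_inl, Matrix.fromRows_apply_inr,
          Matrix.fromCols_apply_inl, Matrix.fromCols_apply_inr,
          Matrix.neg_apply, Matrix.vecMulVec_apply, Matrix.zero_apply, Matrix.smul_apply,
          Matrix.one_apply, Matrix.map_apply, Matrix.of_apply, smul_eq_mul,
          Sum.inl.injEq, Sum.inr.injEq, reduceCtorEq, hEE, hxBdef, hMvdef]
      -- XB block
      · have hne : (↑x : V) ≠ ↑b' := fun h => Set.disjoint_left.mp hXB x.2 (h ▸ b'.2)
        by_cases hx : (↑x : V) ∈ SA'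
        · simp [Matrix.submatrix_apply, hfdef, Sum.elim_inl, Sum.elim_inr,
          Matrix.fromBlocks_apply₁₁, Matrix.fromBlocks_apply₁₂, Matrix.fromBlocks_apply₂₁,
          Matrix.fromBlocks_apply₂₂, Matrix.fromRows_apply_inl, Matrix.fromRows_apply_inr,
          Matrix.fromCols_apply_inl, Matrix.fromCols_apply_inr,
          Matrix.neg_apply, Matrix.vecMulVec_apply, Matrix.zero_apply, Matrix.smul_apply,
          Matrix.one_apply, Matrix.map_apply, Matrix.of_apply, smul_eq_mul,
          Sum.inl.injEq, Sum.inr.injEq, reduceCtorEq, hsF, hMvE, hne, hx, hGxb x b']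
        · simp [Matrix.submatrix_apply, hfdef, Sum.elim_inl, Sum.elim_inr,
          Matrix.fromBlocks_apply₁₁, Matrix.fromBlocks_apply₁₂, Matrix.fromBlocks_apply₂₁,
          Matrix.fromBlocks_apply₂₂, Matrix.fromRows_apply_inl, Matrix.fromRows_apply_inr,
          Matrix.fromCols_apply_inl, Matrix.fromCols_apply_inr,
          Matrix.neg_apply, Matrix.vecMulVec_apply, Matrix.zero_apply, Matrix.smul_apply,
          Matrix.one_apply, Matrix.map_apply, Matrix.of_apply, smul_eq_mul,
          Sum.inl.injEq, Sum.inr.injEq, reduceCtorEq, hsF, hMvE, hne, hx, hGxb x b']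
      -- XC block
      · have hne : (↑x : V) ≠ ↑c' := fun h => Set.disjoint_left.mp hXC x.2 (h ▸ c'.2)
        simp [Matrix.submatrix_apply, hfdef, Sum.elim_inl, Sum.elim_inr,
          Matrix.fromBlocks_apply₁₁, Matrix.fromBlocks_apply₁₂, Matrix.fromBlocks_apply₂₁,
          Matrix.fromBlocks_apply₂₂, Matrix.fromRows_apply_inl, Matrix.fromRows_apply_inr,
          Matrix.fromCols_apply_inl, Matrix.fromCols_apply_inr,
          Matrix.neg_apply, Matrix.vecMulVec_apply, Matrix.zero_apply, Matrix.smul_apply,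
          Matrix.one_apply, Matrix.map_apply, Matrix.of_apply, smul_eq_mul,
          Sum.inl.injEq, Sum.inr.injEq, reduceCtorEq, hMvE, hne, hGxc x c']
      -- BX block
      · have hne : (↑b : V) ≠ ↑x' := fun h => Set.disjoint_right.mp hXB b.2 (h ▸ x'.2)
        have hadj : G.Adj ↑b ↑x' ↔ (↑x' : V) ∈ SA' := by
          rw [SimpleGraph.adj_comm]; exact hGxb x' b
        by_cases hx : (↑x' : V) ∈ SA'
        · simp [Matrix.submatrix_apply, hfdef, Sum.elim_inl, Sum.elim_inr,
          Matrix.fromBlocks_apply₁₁, Matrix.fromBlocks_apply₁₂, Matrix.fromBlocks_apply₂₁,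
          Matrix.fromBlocks_apply₂₂, Matrix.fromRows_apply_inl, Matrix.fromRows_apply_inr,
          Matrix.fromCols_apply_inl, Matrix.fromCols_apply_inr,
          Matrix.neg_apply, Matrix.vecMulVec_apply, Matrix.zero_apply, Matrix.smul_apply,
          Matrix.one_apply, Matrix.map_apply, Matrix.of_apply, smul_eq_mul,
          Sum.inl.injEq, Sum.inr.injEq, reduceCtorEq, hsF, hMvE, hne, hx, hadj]
        · simp [Matrix.submatrix_apply, hfdef, Sum.elim_inl, Sum.elim_inr,
          Matrix.fromBlocks_apply₁₁, Matrix.fromBlocks_apply₁₂, Matrix.fromBlocks_apply₂₁,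
          Matrix.fromBlocks_apply₂₂, Matrix.fromRows_apply_inl, Matrix.fromRows_apply_inr,
          Matrix.fromCols_apply_inl, Matrix.fromCols_apply_inr,
          Matrix.neg_apply, Matrix.vecMulVec_apply, Matrix.zero_apply, Matrix.smul_apply,
          Matrix.one_apply, Matrix.map_apply, Matrix.of_apply, smul_eq_mul,
          Sum.inl.injEq, Sum.inr.injEq, reduceCtorEq, hsF, hMvE, hne, hx, hadj]
      -- BB block
      · by_cases hbb : b = b'
        · subst hbb
          simp [Matrix.submatrix_apply, hfdef, Sum.elim_inl, Sum.elim_inr,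
          Matrix.fromBlocks_apply₁₁, Matrix.fromBlocks_apply₁₂, Matrix.fromBlocks_apply₂₁,
          Matrix.fromBlocks_apply₂₂, Matrix.fromRows_apply_inl, Matrix.fromRows_apply_inr,
          Matrix.fromCols_apply_inl, Matrix.fromCols_apply_inr,
          Matrix.neg_apply, Matrix.vecMulVec_apply, Matrix.zero_apply, Matrix.smul_apply,
          Matrix.one_apply, Matrix.map_apply, Matrix.of_apply, smul_eq_mul,
          Sum.inl.injEq, Sum.inr.injEq, reduceCtorEq, hMvE, SimpleGraph.irrefl, hdegBG, haG, hxBdef]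
        · have hne : (↑b : V) ≠ ↑b' := fun h => hbb (Subtype.ext h)
          simp [Matrix.submatrix_apply, hfdef, Sum.elim_inl, Sum.elim_inr,
          Matrix.fromBlocks_apply₁₁, Matrix.fromBlocks_apply₁₂, Matrix.fromBlocks_apply₂₁,
          Matrix.fromBlocks_apply₂₂, Matrix.fromRows_apply_inl, Matrix.fromRows_apply_inr,
          Matrix.fromCols_apply_inl, Matrix.fromCols_apply_inr,
          Matrix.neg_apply, Matrix.vecMulVec_apply, Matrix.zero_apply, Matrix.smul_apply,
          Matrix.one_apply, Matrix.map_apply, Matrix.of_apply, smul_eq_mul,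
          Sum.inl.injEq, Sum.inr.injEq, reduceCtorEq, hMvE, hne, hbb, hGbb b b']
      -- BC block
      · have hne : (↑b : V) ≠ ↑c' := fun h => Set.disjoint_left.mp hd6 b.2 (h ▸ c'.2)
        simp [Matrix.submatrix_apply, hfdef, Sum.elim_inl, Sum.elim_inr,
          Matrix.fromBlocks_apply₁₁, Matrix.fromBlocks_apply₁₂, Matrix.fromBlocks_apply₂₁,
          Matrix.fromBlocks_apply₂₂, Matrix.fromRows_apply_inl, Matrix.fromRows_apply_inr,
          Matrix.fromCols_apply_inl, Matrix.fromCols_apply_inr,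
          Matrix.neg_apply, Matrix.vecMulVec_apply, Matrix.zero_apply, Matrix.smul_apply,
          Matrix.one_apply, Matrix.map_apply, Matrix.of_apply, smul_eq_mul,
          Sum.inl.injEq, Sum.inr.injEq, reduceCtorEq, hMvE, hne, hGbc b c', hNN]
      -- CX block
      · have hne : (↑c : V) ≠ ↑x' := fun h => Set.disjoint_right.mp hXC c.2 (h ▸ x'.2)
        simp [Matrix.submatrix_apply, hfdef, Sum.elim_inl, Sum.elim_inr,
          Matrix.fromBlocks_apply₁₁, Matrix.fromBlocks_apply₁₂, Matrix.fromBlocks_apply₂₁,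
          Matrix.fromBlocks_apply₂₂, Matrix.fromRows_apply_inl, Matrix.fromRows_apply_inr,
          Matrix.fromCols_apply_inl, Matrix.fromCols_apply_inr,
          Matrix.neg_apply, Matrix.vecMulVec_apply, Matrix.zero_apply, Matrix.smul_apply,
          Matrix.one_apply, Matrix.map_apply, Matrix.of_apply, smul_eq_mul,
          Sum.inl.injEq, Sum.inr.injEq, reduceCtorEq, hMvE, hne, hGcx c x']
      -- CB block
      · have hne : (↑c : V) ≠ ↑b' := fun h => Set.disjoint_right.mp hd6 c.2 (h ▸ b'.2)
        have hadj : G.Adj ↑c ↑b' ↔ P.Adj ↑b' ↑c := by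
          rw [SimpleGraph.adj_comm]; exact hGbc b' c
        simp [Matrix.submatrix_apply, hfdef, Sum.elim_inl, Sum.elim_inr,
          Matrix.fromBlocks_apply₁₁, Matrix.fromBlocks_apply₁₂, Matrix.fromBlocks_apply₂₁,
          Matrix.fromBlocks_apply₂₂, Matrix.fromRows_apply_inl, Matrix.fromRows_apply_inr,
          Matrix.fromCols_apply_inl, Matrix.fromCols_apply_inr,
          Matrix.neg_apply, Matrix.vecMulVec_apply, Matrix.zero_apply, Matrix.smul_apply,
          Matrix.one_apply, Matrix.map_apply, Matrix.of_apply, smul_eq_mul,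
          Sum.inl.injEq, Sum.inr.injEq, reduceCtorEq, hMvE, hne, hadj, hNN]
      -- CC block
      · by_cases hcc : c = c'
        · subst hcc
          simp [Matrix.submatrix_apply, hfdef, Sum.elim_inl, Sum.elim_inr,
          Matrix.fromBlocks_apply₁₁, Matrix.fromBlocks_apply₁₂, Matrix.fromBlocks_apply₂₁,
          Matrix.fromBlocks_apply₂₂, Matrix.fromRows_apply_inl, Matrix.fromRows_apply_inr,
          Matrix.fromCols_apply_inl, Matrix.fromCols_apply_inr,
          Matrix.neg_apply, Matrix.vecMulVec_apply, Matrix.zero_apply, Matrix.smul_apply,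
          Matrix.one_apply, Matrix.map_apply, Matrix.of_apply, smul_eq_mul,
          Sum.inl.injEq, Sum.inr.injEq, reduceCtorEq, hMvE, SimpleGraph.irrefl, hdegCG, hcG, hxBdef]
        · have hne : (↑c : V) ≠ ↑c' := fun h => hcc (Subtype.ext h)
          simp [Matrix.submatrix_apply, hfdef, Sum.elim_inl, Sum.elim_inr,
          Matrix.fromBlocks_apply₁₁, Matrix.fromBlocks_apply₁₂, Matrix.fromBlocks_apply₂₁,
          Matrix.fromBlocks_apply₂₂, Matrix.fromRows_apply_inl, Matrix.fromRows_apply_inr,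
          Matrix.fromCols_apply_inl, Matrix.fromCols_apply_inr,
          Matrix.neg_apply, Matrix.vecMulVec_apply, Matrix.zero_apply, Matrix.smul_apply,
          Matrix.one_apply, Matrix.map_apply, Matrix.of_apply, smul_eq_mul,
          Sum.inl.injEq, Sum.inr.injEq, reduceCtorEq, hMvE, hne, hcc, hGcc c c']
    -- the block shape of the mapped charmatrix of P
    have hshapeP : (Matrix.charmatrix ((adjM P).submatrix f f)).map ψF
        = Matrix.fromBlocks
            (Matrix.fromBlocks (xB • (1 : Matrix ↥SX ↥SX FF))
              (-(Matrix.vecMulVec (fun _ => (0:FF)) ((fun _ => 1) : ↥SB → FF)))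
              (-(Matrix.vecMulVec ((fun _ => 1) : ↥SB → FF) (fun _ => (0:FF)))) (xB • 1))
            (Matrix.fromRows (0 : Matrix ↥SX ↥SC FF) (-((NN P).map φF)))
            (Matrix.fromCols (0 : Matrix ↥SC ↥SX FF) (-(((NN P)ᵀ).map φF)))
            (xB • (1 : Matrix ↥SC ↥SC FF)) := by
      have hAP : ∀ u v, adjM P u v = if P.Adj u v then (1:ℝ) else 0 := fun _ _ => rfl
      ext i j
      rw [aux_charmap ψF ((adjM P).submatrix f f) i j]
      rcases i with (x | b) | c <;> rcases j with (x' | b') | c'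
      -- XX block
      · by_cases hxx : x = x'
        · subst hxx
          simp [hAP, Matrix.submatrix_apply, hfdef, Sum.elim_inl, Sum.elim_inr,
          Matrix.fromBlocks_apply₁₁, Matrix.fromBlocks_apply₁₂, Matrix.fromBlocks_apply₂₁,
          Matrix.fromBlocks_apply₂₂, Matrix.fromRows_apply_inl, Matrix.fromRows_apply_inr,
          Matrix.fromCols_apply_inl, Matrix.fromCols_apply_inr,
          Matrix.neg_apply, Matrix.vecMulVec_apply, Matrix.zero_apply, Matrix.smul_apply,
          Matrix.one_apply, Matrix.map_apply, Matrix.of_apply, smul_eq_mul,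
          Sum.inl.injEq, Sum.inr.injEq, reduceCtorEq, SimpleGraph.irrefl, hxBdef, Algebra.algebraMap_eq_smul_one]
        · have hne : (↑x : V) ≠ ↑x' := fun h => hxx (Subtype.ext h)
          simp [hAP, Matrix.submatrix_apply, hfdef, Sum.elim_inl, Sum.elim_inr,
          Matrix.fromBlocks_apply₁₁, Matrix.fromBlocks_apply₁₂, Matrix.fromBlocks_apply₂₁,
          Matrix.fromBlocks_apply₂₂, Matrix.fromRows_apply_inl, Matrix.fromRows_apply_inr,
          Matrix.fromCols_apply_inl, Matrix.fromCols_apply_inr,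
          Matrix.neg_apply, Matrix.vecMulVec_apply, Matrix.zero_apply, Matrix.smul_apply,
          Matrix.one_apply, Matrix.map_apply, Matrix.of_apply, smul_eq_mul,
          Sum.inl.injEq, Sum.inr.injEq, reduceCtorEq, hne, hxx, hPnX ↑x ↑x' x.2]
      -- XB block
      · simp [hAP, Matrix.submatrix_apply, hfdef, Sum.elim_inl, Sum.elim_inr,
          Matrix.fromBlocks_apply₁₁, Matrix.fromBlocks_apply₁₂, Matrix.fromBlocks_apply₂₁,
          Matrix.fromBlocks_apply₂₂, Matrix.fromRows_apply_inl, Matrix.fromRows_apply_inr,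
          Matrix.fromCols_apply_inl, Matrix.fromCols_apply_inr,
          Matrix.neg_apply, Matrix.vecMulVec_apply, Matrix.zero_apply, Matrix.smul_apply,
          Matrix.one_apply, Matrix.map_apply, Matrix.of_apply, smul_eq_mul,
          Sum.inl.injEq, Sum.inr.injEq, reduceCtorEq, hPnX ↑x ↑b' x.2]
      -- XC block
      · simp [hAP, Matrix.submatrix_apply, hfdef, Sum.elim_inl, Sum.elim_inr,
          Matrix.fromBlocks_apply₁₁, Matrix.fromBlocks_apply₁₂, Matrix.fromBlocks_apply₂₁,
          Matrix.fromBlocks_apply₂₂, Matrix.fromRows_apply_inl, Matrix.fromRows_apply_inr,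
          Matrix.fromCols_apply_inl, Matrix.fromCols_apply_inr,
          Matrix.neg_apply, Matrix.vecMulVec_apply, Matrix.zero_apply, Matrix.smul_apply,
          Matrix.one_apply, Matrix.map_apply, Matrix.of_apply, smul_eq_mul,
          Sum.inl.injEq, Sum.inr.injEq, reduceCtorEq, hPnX ↑x ↑c' x.2]
      -- BX block
      · have hnadj : ¬P.Adj ↑b ↑x' := fun h => hPnX _ _ x'.2 h.symm
        simp [hAP, Matrix.submatrix_apply, hfdef, Sum.elim_inl, Sum.elim_inr,
          Matrix.fromBlocks_apply₁₁, Matrix.fromBlocks_apply₁₂, Matrix.fromBlocks_apply₂₁,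
          Matrix.fromBlocks_apply₂₂, Matrix.fromRows_apply_inl, Matrix.fromRows_apply_inr,
          Matrix.fromCols_apply_inl, Matrix.fromCols_apply_inr,
          Matrix.neg_apply, Matrix.vecMulVec_apply, Matrix.zero_apply, Matrix.smul_apply,
          Matrix.one_apply, Matrix.map_apply, Matrix.of_apply, smul_eq_mul,
          Sum.inl.injEq, Sum.inr.injEq, reduceCtorEq, hnadj]
      -- BB block
      · by_cases hbb : b = b'
        · subst hbb
          simp [hAP, Matrix.submatrix_apply, hfdef, Sum.elim_inl, Sum.elim_inr,
          Matrix.fromBlocks_apply₁₁, Matrix.fromBlocks_apply₁₂, Matrix.fromBlocks_apply₂₁,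
          Matrix.fromBlocks_apply₂₂, Matrix.fromRows_apply_inl, Matrix.fromRows_apply_inr,
          Matrix.fromCols_apply_inl, Matrix.fromCols_apply_inr,
          Matrix.neg_apply, Matrix.vecMulVec_apply, Matrix.zero_apply, Matrix.smul_apply,
          Matrix.one_apply, Matrix.map_apply, Matrix.of_apply, smul_eq_mul,
          Sum.inl.injEq, Sum.inr.injEq, reduceCtorEq, SimpleGraph.irrefl, hxBdef, Algebra.algebraMap_eq_smul_one]
        · have hne : (↑b : V) ≠ ↑b' := fun h => hbb (Subtype.ext h)
          have hnadj : ¬P.Adj ↑b ↑b' := fun h => Set.disjoint_left.mp hd6 b'.2 (hPB _ _ h b.2)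
          simp [hAP, Matrix.submatrix_apply, hfdef, Sum.elim_inl, Sum.elim_inr,
          Matrix.fromBlocks_apply₁₁, Matrix.fromBlocks_apply₁₂, Matrix.fromBlocks_apply₂₁,
          Matrix.fromBlocks_apply₂₂, Matrix.fromRows_apply_inl, Matrix.fromRows_apply_inr,
          Matrix.fromCols_apply_inl, Matrix.fromCols_apply_inr,
          Matrix.neg_apply, Matrix.vecMulVec_apply, Matrix.zero_apply, Matrix.smul_apply,
          Matrix.one_apply, Matrix.map_apply, Matrix.of_apply, smul_eq_mul,
          Sum.inl.injEq, Sum.inr.injEq, reduceCtorEq, hne, hbb, hnadj]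
      -- BC block
      · simp [hAP, Matrix.submatrix_apply, hfdef, Sum.elim_inl, Sum.elim_inr,
          Matrix.fromBlocks_apply₁₁, Matrix.fromBlocks_apply₁₂, Matrix.fromBlocks_apply₂₁,
          Matrix.fromBlocks_apply₂₂, Matrix.fromRows_apply_inl, Matrix.fromRows_apply_inr,
          Matrix.fromCols_apply_inl, Matrix.fromCols_apply_inr,
          Matrix.neg_apply, Matrix.vecMulVec_apply, Matrix.zero_apply, Matrix.smul_apply,
          Matrix.one_apply, Matrix.map_apply, Matrix.of_apply, smul_eq_mul,
          Sum.inl.injEq, Sum.inr.injEq, reduceCtorEq, hNN]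
      -- CX block
      · have hnadj : ¬P.Adj ↑c ↑x' := fun h => hPnX _ _ x'.2 h.symm
        simp [hAP, Matrix.submatrix_apply, hfdef, Sum.elim_inl, Sum.elim_inr,
          Matrix.fromBlocks_apply₁₁, Matrix.fromBlocks_apply₁₂, Matrix.fromBlocks_apply₂₁,
          Matrix.fromBlocks_apply₂₂, Matrix.fromRows_apply_inl, Matrix.fromRows_apply_inr,
          Matrix.fromCols_apply_inl, Matrix.fromCols_apply_inr,
          Matrix.neg_apply, Matrix.vecMulVec_apply, Matrix.zero_apply, Matrix.smul_apply,
          Matrix.one_apply, Matrix.map_apply, Matrix.of_apply, smul_eq_mul,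
          Sum.inl.injEq, Sum.inr.injEq, reduceCtorEq, hnadj]
      -- CB block
      · have hadj : P.Adj ↑c ↑b' ↔ P.Adj ↑b' ↑c := P.adj_comm _ _
        simp [hAP, Matrix.submatrix_apply, hfdef, Sum.elim_inl, Sum.elim_inr,
          Matrix.fromBlocks_apply₁₁, Matrix.fromBlocks_apply₁₂, Matrix.fromBlocks_apply₂₁,
          Matrix.fromBlocks_apply₂₂, Matrix.fromRows_apply_inl, Matrix.fromRows_apply_inr,
          Matrix.fromCols_apply_inl, Matrix.fromCols_apply_inr,
          Matrix.neg_apply, Matrix.vecMulVec_apply, Matrix.zero_apply, Matrix.smul_apply,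
          Matrix.one_apply, Matrix.map_apply, Matrix.of_apply, smul_eq_mul,
          Sum.inl.injEq, Sum.inr.injEq, reduceCtorEq, hNN, hadj]
      -- CC block
      · by_cases hcc : c = c'
        · subst hcc
          simp [hAP, Matrix.submatrix_apply, hfdef, Sum.elim_inl, Sum.elim_inr,
          Matrix.fromBlocks_apply₁₁, Matrix.fromBlocks_apply₁₂, Matrix.fromBlocks_apply₂₁,
          Matrix.fromBlocks_apply₂₂, Matrix.fromRows_apply_inl, Matrix.fromRows_apply_inr,
          Matrix.fromCols_apply_inl, Matrix.fromCols_apply_inr,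
          Matrix.neg_apply, Matrix.vecMulVec_apply, Matrix.zero_apply, Matrix.smul_apply,
          Matrix.one_apply, Matrix.map_apply, Matrix.of_apply, smul_eq_mul,
          Sum.inl.injEq, Sum.inr.injEq, reduceCtorEq, SimpleGraph.irrefl, hxBdef, Algebra.algebraMap_eq_smul_one]
        · have hne : (↑c : V) ≠ ↑c' := fun h => hcc (Subtype.ext h)
          have hnadj : ¬P.Adj ↑c ↑c' := fun h => Set.disjoint_left.mp hd6 (hPC _ _ h c.2) c'.2
          simp [hAP, Matrix.submatrix_apply, hfdef, Sum.elim_inl, Sum.elim_inr,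
          Matrix.fromBlocks_apply₁₁, Matrix.fromBlocks_apply₁₂, Matrix.fromBlocks_apply₂₁,
          Matrix.fromBlocks_apply₂₂, Matrix.fromRows_apply_inl, Matrix.fromRows_apply_inr,
          Matrix.fromCols_apply_inl, Matrix.fromCols_apply_inr,
          Matrix.neg_apply, Matrix.vecMulVec_apply, Matrix.zero_apply, Matrix.smul_apply,
          Matrix.one_apply, Matrix.map_apply, Matrix.of_apply, smul_eq_mul,
          Sum.inl.injEq, Sum.inr.injEq, reduceCtorEq, hne, hcc, hnadj]
    -- reindexing invariance
    have hcoe : ⇑eqv = f := by rw [heqv]; rfl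
    have hreG : ((Mv.submatrix f f).charpoly) = Mv.charpoly := by
      conv_rhs => rw [← Matrix.charpoly_reindex eqv.symm Mv]
      rw [Matrix.reindex_apply, Equiv.symm_symm, hcoe]
    have hreP : (((adjM P).submatrix f f).charpoly) = (adjM P).charpoly := by
      conv_rhs => rw [← Matrix.charpoly_reindex eqv.symm (adjM P)]
      rw [Matrix.reindex_apply, Equiv.symm_symm, hcoe]
    constructor
    · calc ψF (Mv.charpoly)
          = ((Matrix.charmatrix (Mv.submatrix f f)).map ψF).det := by
            rw [← hreG, Matrix.charpoly, RingHom.map_det, RingHom.mapMatrix_apply]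
        _ = cG ^ Fintype.card ↥SC * (cG⁻¹) ^ Fintype.card ↥SB *
              Polynomial.eval₂ φF (aG * cG) (NN P * (NN P)ᵀ).charpoly *
              ((EE G) - (((aG - cG⁻¹ * μF)⁻¹) * (Fintype.card ↥SB : FF)) •
                Matrix.vecMulVec sF sF).det := by
            rw [hshapeG]
            exact pipeline φF (NN P) (EE G) sF aG cG μF hcGne hacμG hMeigF hWG
        _ = cG ^ Fintype.card ↥SC * (cG⁻¹) ^ Fintype.card ↥SB *
              Polynomial.eval₂ φF (aG * cG) (NN P * (NN P)ᵀ).charpoly *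
              ((EE G) - wB • Matrix.vecMulVec sF sF).det := by rw [hwB]
    · have hvv0 : Matrix.vecMulVec (fun _ => (0:FF)) (fun _ => (0:FF))
          = (0 : Matrix ↥SX ↥SX FF) := by
        ext i j
        simp [Matrix.vecMulVec_apply]
      calc ψF ((adjM P).charpoly)
          = ((Matrix.charmatrix ((adjM P).submatrix f f)).map ψF).det := by
            rw [← hreP, Matrix.charpoly, RingHom.map_det, RingHom.mapMatrix_apply]
        _ = xB ^ Fintype.card ↥SC * (xB⁻¹) ^ Fintype.card ↥SB *
              Polynomial.eval₂ φF (xB * xB) (NN P * (NN P)ᵀ).charpoly *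
              ((xB • (1 : Matrix ↥SX ↥SX FF)) - (((xB - xB⁻¹ * μF)⁻¹) * (Fintype.card ↥SB : FF)) •
                Matrix.vecMulVec (fun _ => (0:FF)) (fun _ => (0:FF))).det := by
            rw [hshapeP]
            exact pipeline φF (NN P) (xB • 1) (fun _ => (0:FF)) xB xB μF hxB hacμP hMeigF hWP
        _ = xB ^ Fintype.card ↥SC * (xB⁻¹) ^ Fintype.card ↥SB *
              Polynomial.eval₂ φF (xB * xB) (NN P * (NN P)ᵀ).charpoly *
              xB ^ Fintype.card ↥SX := by
            rw [hvv0, smul_zero, sub_zero, Matrix.det_smul, Matrix.det_one, mul_one]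
  obtain ⟨hG1, hP1⟩ := main P₁ G₁ hP₁bip hP₁degB hP₁degC hG₁
  obtain ⟨hG2, hP2⟩ := main P₂ G₂ hP₂bip hP₂degB hP₂degC hG₂
  -- extract equality of the charpolys of N Nᵀ
  have hNchar : (NN P₁ * (NN P₁)ᵀ).charpoly = (NN P₂ * (NN P₂)ᵀ).charpoly := by
    have h := hP1.symm.trans ((congrArg ψF hPcospec).trans hP2)
    have hA : xB ^ Fintype.card ↥SC * (xB⁻¹) ^ Fintype.card ↥SB ≠ 0 :=
      mul_ne_zero (pow_ne_zero _ hxB) (pow_ne_zero _ (inv_ne_zero hxB))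
    have h1 := mul_right_cancel₀ (pow_ne_zero (Fintype.card ↥SX) hxB) h
    have h2 := mul_left_cancel₀ hA h1
    have hXX : xB * xB = ψF (Polynomial.X * Polynomial.X) := by rw [_root_.map_mul]
    rw [hXX, aux_psi_comp, aux_psi_comp] at h2
    exact aux_comp_sq_inj _ _ (ψF_inj h2)
  -- the X-block matrices agree
  have hEEeq : EE G₁ = EE G₂ := by
    have hadjX : ∀ u, u ∈ SX → ∀ v, (G₁.Adj u v ↔ H.Adj u v ∨ (u ∈ SA' ∧ v ∈ SB)) ∧
        (G₂.Adj u v ↔ H.Adj u v ∨ (u ∈ SA' ∧ v ∈ SB)) := by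
      intro u hu v
      have hub : u ∉ SB := fun hb => Set.disjoint_left.mp hXB hu hb
      have hP : ∀ (P : SimpleGraph V),
          (∀ u v, P.Adj u v → (u ∈ SB ∧ v ∈ SC) ∨ (u ∈ SC ∧ v ∈ SB)) → ¬P.Adj u v := by
        intro P hbip hadj
        rcases hbip _ _ hadj with ⟨h1, _⟩ | ⟨h1, _⟩
        · exact hub h1
        · exact Set.disjoint_left.mp hXC hu h1
      constructor
      · rw [hG₁ u v]
        constructor
        · rintro (h | h | ⟨h1, _⟩ | h)
          · exact Or.inl h
          · exact Or.inr h
          · exact absurd h1 hub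
          · exact absurd h (hP P₁ hP₁bip)
        · rintro (h | h)
          · exact Or.inl h
          · exact Or.inr (Or.inl h)
      · rw [hG₂ u v]
        constructor
        · rintro (h | h | ⟨h1, _⟩ | h)
          · exact Or.inl h
          · exact Or.inr h
          · exact absurd h1 hub
          · exact absurd h (hP P₂ hP₂bip)
        · rintro (h | h)
          · exact Or.inl h
          · exact Or.inr (Or.inl h)
    have hdegXeq : ∀ u, u ∈ SX → G₁.degree u = G₂.degree u := by
      intro u hu
      have hnb : G₁.neighborFinset u = G₂.neighborFinset u := by
        ext v
        simp only [SimpleGraph.mem_neighborFinset]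
        rw [(hadjX u hu v).1, (hadjX u hu v).2]
      show (G₁.neighborFinset u).card = (G₂.neighborFinset u).card
      rw [hnb]
    ext x x'
    simp only [hEE, Matrix.of_apply]
    congr 2
    simp only [Matrix.add_apply, Matrix.smul_apply, adjM, degM, Matrix.diagonal_apply,
      smul_eq_mul]
    rw [hdegXeq ↑x x.2]
    congr 1
    by_cases hA : G₁.Adj ↑x ↑x'
    · rw [if_pos hA, if_pos (((hadjX ↑x x.2 ↑x').2).mpr (((hadjX ↑x x.2 ↑x').1).mp hA))]
    · rw [if_neg hA, if_neg (fun h => hA (((hadjX ↑x x.2 ↑x').1).mpr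
        (((hadjX ↑x x.2 ↑x').2).mp h)))]
  -- finish
  apply ψF_inj
  rw [hG1, hG2, hNchar, hEEeq]
end

section
/- Fix n ≥ k ≥ 1. For a partition n = m₁ + ⋯ + m_k into positive integers, define the fuzzy ball FB(m₁,…,m_k) on n+k vertices b₁,…,b_n, v₁,…,v_k where {b₁,…,b_n} induces a complete graph, the b_i are partitioned into blocks of sizes m₁,…,m_k, and v_j is adjacent exactly to the b_i in the j-th block. Then any two fuzzy balls FB(m₁,…,m_k) and FB(m₁',…,m_k') with m₁+⋯+m_k = m₁'+⋯+m_k' = n are cospectral with respect to the normalized Laplacian. -/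
open scoped Classical
open Matrix Finset
open scoped RealInnerProductSpace
/-- The fuzzy ball determined by a block assignment `f : Fin n → Fin k`: the `b`-vertices
form a complete graph, and each `v_j` is adjacent exactly to the `b_i` with `f i = j`. -/
def FB {n k : ℕ} (f : Fin n → Fin k) : SimpleGraph (Fin n ⊕ Fin k) where
  Adj u v :=
    match u, v with
    | Sum.inl i, Sum.inl i' => i ≠ i'
    | Sum.inl i, Sum.inr j => f i = j
    | Sum.inr j, Sum.inl i => f i = j
    | Sum.inr _, Sum.inr _ => False
  symm := by
    constructor
    rintro (i | j) (i' | j') h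
    · exact h.symm
    · exact h
    · exact h
    · exact h.elim
  loopless := by
    constructor
    rintro (i | j) h
    · exact h rfl
    · exact h

open Matrix Polynomial in
lemma charpoly_conj_aux {m : Type*} [Fintype m] [DecidableEq m] {R : Type*} [CommRing R]
    (P Q A : Matrix m m R) (h1 : P * Q = 1) (h2 : Q * P = 1) :
    (Q * A * P).charpoly = A.charpoly := by
  have hQP : (Q.map C) * (P.map C) = 1 := by
    rw [← Matrix.map_mul, h2, Matrix.map_one C (map_zero _) (map_one _)]
  have key : charmatrix (Q * A * P) = (Q.map C) * charmatrix A * (P.map C) := by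
    unfold charmatrix
    rw [Matrix.mul_sub, Matrix.sub_mul]
    congr 1
    · rw [Matrix.mul_assoc, (Matrix.scalar_commute (X : R[X]) (fun r => Commute.all _ r) (P.map C)).eq,
        ← Matrix.mul_assoc, hQP, Matrix.one_mul]
    · simp [Matrix.map_mul, Matrix.mul_assoc]
  rw [Matrix.charpoly, key, det_mul, det_mul, Matrix.charpoly]
  have h3 : (Q.map C).det * (P.map C).det = 1 := by
    rw [← det_mul, hQP, det_one]
  calc (Q.map C).det * (charmatrix A).det * (P.map C).det
      = (Q.map C).det * (P.map C).det * (charmatrix A).det := by ring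
    _ = (charmatrix A).det := by rw [h3, one_mul]

section
variable {n k : ℕ} (f : Fin n → Fin k)

lemma FB_adj_ll (i i' : Fin n) : (FB f).Adj (.inl i) (.inl i') ↔ i ≠ i' := Iff.rfl
lemma FB_adj_lr (i : Fin n) (j : Fin k) : (FB f).Adj (.inl i) (.inr j) ↔ f i = j := Iff.rfl
lemma FB_adj_rl (i : Fin n) (j : Fin k) : (FB f).Adj (.inr j) (.inl i) ↔ f i = j := Iff.rfl
lemma FB_adj_rr (j j' : Fin k) : ¬ (FB f).Adj (.inr j) (.inr j') := fun h => h

lemma FB_degree_inl (hk : 1 ≤ k) (i : Fin n) : (FB f).degree (Sum.inl i) = n := by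
  classical
  rw [← SimpleGraph.card_neighborSet_eq_degree]
  have : (FB f).neighborSet (Sum.inl i) ≃ {i' : Fin n // i' ≠ i} ⊕ Unit := by
    refine Equiv.symm ⟨fun x => match x with
      | Sum.inl ⟨i', h⟩ => ⟨Sum.inl i', Ne.symm h⟩
      | Sum.inr _ => ⟨Sum.inr (f i), rfl⟩,
      fun x => match x with
      | ⟨Sum.inl i', h⟩ => Sum.inl ⟨i', fun he => (h : i ≠ i') he.symm⟩
      | ⟨Sum.inr j, h⟩ => Sum.inr (),
      ?_, ?_⟩
    · rintro (⟨i', h⟩ | ⟨⟩) <;> rfl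
    · rintro ⟨(i' | j), h⟩
      · rfl
      · have : f i = j := h
        simp [this.symm]
  rw [Fintype.card_congr this]
  have hn1 : 0 < n := i.pos
  simp [Fintype.card_subtype_compl]
  omega
end

section
variable {n k : ℕ} (f : Fin n → Fin k)

lemma FB_degree_inr (j : Fin k) :
    (FB f).degree (Sum.inr j) = (Finset.univ.filter fun i => f i = j).card := by
  classical
  rw [← SimpleGraph.card_neighborSet_eq_degree]
  have : (FB f).neighborSet (Sum.inr j) ≃ {i : Fin n // f i = j} := by
    refine ⟨fun x => match x with
      | ⟨Sum.inl i, h⟩ => ⟨i, h⟩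
      | ⟨Sum.inr j', h⟩ => absurd h (FB_adj_rr f j j'),
      fun x => ⟨Sum.inl x.1, x.2⟩, ?_, ?_⟩
    · rintro ⟨(i | j'), h⟩
      · rfl
      · exact absurd h (FB_adj_rr f j j')
    · rintro ⟨i, h⟩; rfl
  rw [Fintype.card_congr this, Fintype.card_subtype]
end

section
variable {n k : ℕ} (f : Fin n → Fin k)

/-- block size -/
def bm (f : Fin n → Fin k) (j : Fin k) : ℕ := (Finset.univ.filter fun i => f i = j).card

noncomputable def Uf (f : Fin n → Fin k) : Matrix (Fin n) (Fin k) ℝ :=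
  fun i j => if f i = j then (Real.sqrt (bm f j))⁻¹ else 0

lemma normLap_entry {V : Type*} [Fintype V] (G : SimpleGraph V) (u v : V) :
    normLap G u v = (Real.sqrt (G.degree u))⁻¹ * ((degM G - adjM G) u v) *
      (Real.sqrt (G.degree v))⁻¹ := by
  classical
  simp [normLap, Matrix.mul_diagonal, Matrix.diagonal_mul]

lemma normLap_entry' {V : Type*} [Fintype V] (G : SimpleGraph V) (u v : V) :
    normLap G u v = (Real.sqrt (G.degree u))⁻¹ *
      ((if u = v then (G.degree u : ℝ) else 0) - (if G.Adj u v then 1 else 0)) *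
      (Real.sqrt (G.degree v))⁻¹ := by
  classical
  rw [normLap_entry]
  simp [degM, adjM, Matrix.diagonal_apply]

lemma inv_sqrt_mul_self (c : ℝ) (hc : 0 < c) :
    (Real.sqrt c)⁻¹ * c * (Real.sqrt c)⁻¹ = 1 := by
  have h := Real.mul_self_sqrt hc.le
  have : Real.sqrt c ≠ 0 := by positivity
  field_simp
  rw [sq, h]

lemma inv_sqrt_mul_inv_sqrt (c : ℝ) (hc : 0 < c) :
    (Real.sqrt c)⁻¹ * (Real.sqrt c)⁻¹ = c⁻¹ := by
  rw [← mul_inv, Real.mul_self_sqrt hc.le]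

lemma normLap_FB_blocks (hk : 1 ≤ k) (hn : k ≤ n) (hf : ∀ j, 1 ≤ bm f j) :
    normLap (FB f) = Matrix.fromBlocks
      (Matrix.of fun i i' : Fin n => if i = i' then (1:ℝ) else -(n:ℝ)⁻¹)
      (-((Real.sqrt n)⁻¹ • Uf f)) (-((Real.sqrt n)⁻¹ • Uf f))ᵀ 1 := by
  classical
  have hn1 : 0 < n := lt_of_lt_of_le hk hn
  have hsn : Real.sqrt n ≠ 0 := by positivity
  have hsn2 : Real.sqrt n * Real.sqrt n = (n:ℝ) := Real.mul_self_sqrt (by positivity)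
  ext u v
  rw [normLap_entry']
  rcases u with i | j <;> rcases v with i' | j'
  · rw [FB_degree_inl f hk i, FB_degree_inl f hk i']
    by_cases h : i = i'
    · subst h
      have : ¬ (FB f).Adj (Sum.inl i) (Sum.inl i) := by simp [FB_adj_ll]
      simp only [this, if_true, if_neg, Matrix.fromBlocks_apply₁₁, Matrix.of_apply, if_pos rfl,
        ite_false, sub_zero]
      exact inv_sqrt_mul_self _ (by positivity)
    · have hadj : (FB f).Adj (Sum.inl i) (Sum.inl i') := h
      have : (Sum.inl i : Fin n ⊕ Fin k) ≠ Sum.inl i' := by simp [h]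
      rw [if_neg this, if_pos hadj]
      simp only [Matrix.fromBlocks_apply₁₁, Matrix.of_apply, if_neg h]
      rw [zero_sub]
      rw [show ((√(n:ℝ))⁻¹ * -1 * (√(n:ℝ))⁻¹ : ℝ) = -((√(n:ℝ))⁻¹ * (√(n:ℝ))⁻¹) by ring,
        inv_sqrt_mul_inv_sqrt _ (by positivity)]
  · rw [FB_degree_inl f hk i, FB_degree_inr f j']
    have : (Sum.inl i : Fin n ⊕ Fin k) ≠ Sum.inr j' := by simp
    rw [if_neg this]
    simp only [Matrix.fromBlocks_apply₁₂, Matrix.neg_apply, Matrix.smul_apply, Uf, bm,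
      FB_adj_lr, smul_eq_mul]
    by_cases h : f i = j' <;> simp [h] <;> ring
  · rw [FB_degree_inr f j, FB_degree_inl f hk i']
    have : (Sum.inr j : Fin n ⊕ Fin k) ≠ Sum.inl i' := by simp
    rw [if_neg this]
    simp only [Matrix.fromBlocks_apply₂₁, Matrix.transpose_apply, Matrix.neg_apply,
      Matrix.smul_apply, Uf, bm, FB_adj_rl, smul_eq_mul]
    by_cases h : f i' = j <;> simp [h] <;> ring
  · rw [FB_degree_inr f j, FB_degree_inr f j']
    have hmj : 0 < bm f j := hf j
    have hsm : Real.sqrt (bm f j) * Real.sqrt (bm f j) = (bm f j : ℝ) :=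
      Real.mul_self_sqrt (by positivity)
    have hsmn : Real.sqrt (bm f j) ≠ 0 := by positivity
    have hadj : ¬ (FB f).Adj (Sum.inr j) (Sum.inr j') := FB_adj_rr f j j'
    rw [if_neg hadj]
    by_cases h : j = j'
    · subst h
      rw [if_pos rfl]
      simp only [Matrix.fromBlocks_apply₂₂, Matrix.one_apply, if_pos rfl, sub_zero, bm]
      exact inv_sqrt_mul_self _ (by exact_mod_cast hmj)
    · have : (Sum.inr j : Fin n ⊕ Fin k) ≠ Sum.inr j' := by simp [h]
      rw [if_neg this]
      simp [Matrix.one_apply, h]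
end

noncomputable section
variable {n k : ℕ}

def uvec (f : Fin n → Fin k) (j : Fin k) : EuclideanSpace ℝ (Fin n) :=
  WithLp.toLp 2 (fun i => if f i = j then (Real.sqrt (bm f j))⁻¹ else 0)

variable (f : Fin n → Fin k)

lemma sum_ite_fiber (j : Fin k) (c : ℝ) :
    ∑ i, (if f i = j then c else 0) = (bm f j : ℝ) * c := by
  rw [← Finset.sum_filter, Finset.sum_const, nsmul_eq_mul, bm]

lemma inner_euclidean (x y : EuclideanSpace ℝ (Fin n)) : ⟪x, y⟫ = ∑ i, x i * y i := by
  simp [PiLp.inner_apply, RCLike.inner_apply, conj_trivial]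
  exact Finset.sum_congr rfl fun _ _ => mul_comm _ _

lemma span_inner_sum (u : Fin k → EuclideanSpace ℝ (Fin n)) (hu : Orthonormal ℝ u)
    {y : EuclideanSpace ℝ (Fin n)} (hy : y ∈ Submodule.span ℝ (Set.range u))
    (x : EuclideanSpace ℝ (Fin n)) :
    ∑ j, ⟪x, u j⟫ * ⟪y, u j⟫ = ⟪x, y⟫ := by
  classical
  obtain ⟨a, rfl⟩ := (Submodule.mem_span_range_iff_exists_fun ℝ).mp hy
  have hc : ∀ j, ⟪∑ l, a l • u l, u j⟫ = a j := by
    intro j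
    rw [sum_inner]
    simp only [real_inner_smul_left]
    rw [Finset.sum_eq_single j]
    · rw [(orthonormal_iff_ite.mp hu) j j, if_pos rfl, mul_one]
    · intro l _ hl
      rw [(orthonormal_iff_ite.mp hu) l j, if_neg hl, mul_zero]
    · simp
  simp only [hc]
  rw [inner_sum]
  simp only [real_inner_smul_right]
  ring_nf
  apply Finset.sum_congr rfl
  intros; ring

lemma uvec_orthonormal (hf : ∀ j, 1 ≤ bm f j) : Orthonormal ℝ (uvec f) := by
  rw [orthonormal_iff_ite]
  intro j j'
  rw [inner_euclidean]
  by_cases h : j = j'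
  · subst h
    rw [if_pos rfl]
    have hm : (0:ℝ) < (bm f j : ℝ) := by exact_mod_cast hf j
    have : ∀ i, uvec f j i * uvec f j i = (if f i = j then ((bm f j : ℝ))⁻¹ else 0) := by
      intro i
      by_cases hfi : f i = j <;>
        simp [uvec, hfi, ← mul_inv, Real.mul_self_sqrt hm.le]
    rw [Finset.sum_congr rfl fun i _ => this i, sum_ite_fiber]
    field_simp
  · rw [if_neg h]
    apply Finset.sum_eq_zero
    intro i _
    by_cases hfi : f i = j <;> by_cases hfi' : f i = j'
    · exact absurd (hfi ▸ hfi') h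
    all_goals
      simp only [uvec, hfi, hfi', if_true, if_false, ite_mul, mul_ite, mul_zero, zero_mul,
        if_neg (show ¬ j = j' from h), if_neg (show ¬ j' = j from fun h' => h h'.symm)]
    all_goals try rfl
    all_goals simp

lemma sum_bm (f : Fin n → Fin k) : ∑ j, bm f j = n := by
  classical
  have := Finset.card_eq_sum_card_fiberwise (f := f) (s := Finset.univ) (t := Finset.univ)
    (fun i _ => Finset.mem_univ (f i))
  simpa [bm] using this.symm

lemma euclid_sum_apply {m : ℕ} (v : Fin m → EuclideanSpace ℝ (Fin n)) (c : Fin m → ℝ)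
    (i : Fin n) : (∑ j, c j • v j) i = ∑ j, c j * v j i := by
  induction (Finset.univ : Finset (Fin m)) using Finset.induction with
  | empty => rfl
  | insert _ _ h ih =>
      rw [Finset.sum_insert h, Finset.sum_insert h, ← ih]
      rfl

def e1vec (n : ℕ) : EuclideanSpace ℝ (Fin n) := WithLp.toLp 2 (fun _ => (Real.sqrt n)⁻¹)

lemma e1_eq_sum (hf : ∀ j, 1 ≤ bm f j) :
    ∑ j, (Real.sqrt (bm f j) * (Real.sqrt n)⁻¹) • uvec f j = e1vec n := by
  ext i
  have happ : (∑ j, (Real.sqrt (bm f j) * (Real.sqrt n)⁻¹) • uvec f j) i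
      = ∑ j, (Real.sqrt (bm f j) * (Real.sqrt n)⁻¹) * uvec f j i :=
    euclid_sum_apply _ _ i
  rw [happ]
  have : ∀ j, (Real.sqrt (bm f j) * (Real.sqrt n)⁻¹) * uvec f j i
      = if f i = j then (Real.sqrt n)⁻¹ else 0 := by
    intro j
    have hm : (0:ℝ) < (bm f j : ℝ) := by exact_mod_cast hf j
    have hs : Real.sqrt (bm f j) ≠ 0 := by positivity
    by_cases hfi : f i = j <;> simp [uvec, hfi]
    rw [mul_comm (Real.sqrt (bm f j)) ((Real.sqrt (n:ℝ))⁻¹), mul_assoc,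
      mul_inv_cancel₀ hs, mul_one]
  rw [Finset.sum_congr rfl fun j _ => this j, Finset.sum_ite_eq]
  simp [e1vec]

lemma e1_mem_span (hf : ∀ j, 1 ≤ bm f j) :
    e1vec n ∈ Submodule.span ℝ (Set.range (uvec f)) :=
  (Submodule.mem_span_range_iff_exists_fun ℝ).mpr ⟨_, e1_eq_sum f hf⟩

lemma e1_norm (hn1 : 0 < n) : ⟪e1vec n, e1vec n⟫ = 1 := by
  rw [inner_euclidean]
  have h0 : (0:ℝ) < (n:ℝ) := by exact_mod_cast hn1
  have : Real.sqrt n ≠ 0 := by positivity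
  simp [e1vec, Finset.sum_const, ← mul_inv, Real.mul_self_sqrt h0.le]
  field_simp

lemma exists_good_basis (hk : 1 ≤ k) (hn : k ≤ n) (hf : ∀ j, 1 ≤ bm f j) :
    ∃ b : OrthonormalBasis (Fin n) ℝ (EuclideanSpace ℝ (Fin n)),
      (∀ j : Fin k, b (Fin.castLE hn j) ∈ Submodule.span ℝ (Set.range (uvec f))) ∧
      b (Fin.castLE hn ⟨0, hk⟩) = e1vec n := by
  classical
  set W := Submodule.span ℝ (Set.range (uvec f)) with hW
  have hn1 : 0 < n := lt_of_lt_of_le hk hn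
  have hWrank : Module.finrank ℝ W = Fintype.card (Fin k) := by
    rw [finrank_span_eq_card (uvec_orthonormal f hf).linearIndependent]
  set e1W : W := ⟨e1vec n, e1_mem_span f hf⟩ with he1W
  have hv : Orthonormal ℝ (Set.restrict {(⟨0, hk⟩ : Fin k)} (fun _ => e1W)) := by
    rw [orthonormal_iff_ite]
    rintro ⟨a, ha⟩ ⟨b, hb⟩
    have hab : a = b := by
      simp only [Set.mem_singleton_iff] at ha hb; rw [ha, hb]
    subst hab
    simp only [Set.restrict, Set.domRestrict_apply, Set.restrict_apply, if_pos rfl]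
    have h1 : (inner ℝ e1W e1W : ℝ) = ⟪e1vec n, e1vec n⟫ := rfl
    simp only [h1, e1_norm hn1, if_true]
  obtain ⟨c, hc⟩ := hv.exists_orthonormalBasis_extension_of_card_eq hWrank
  have hc0 : c ⟨0, hk⟩ = e1W := hc _ rfl
  -- extend to the whole space
  set v' : Fin n → EuclideanSpace ℝ (Fin n) :=
    fun i => if h : (i : ℕ) < k then (c ⟨i, h⟩ : EuclideanSpace ℝ (Fin n)) else 0 with hv'
  have hrank : Module.finrank ℝ (EuclideanSpace ℝ (Fin n)) = Fintype.card (Fin n) := by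
    simp [finrank_euclideanSpace_fin]
  have hv'on : Orthonormal ℝ (Set.restrict {i : Fin n | (i : ℕ) < k} v') := by
    rw [orthonormal_iff_ite]
    rintro ⟨a, ha⟩ ⟨b, hb⟩
    have ha' : (a : ℕ) < k := ha
    have hb' : (b : ℕ) < k := hb
    simp only [Set.restrict, Set.domRestrict_apply, Set.restrict_apply, hv', dif_pos ha', dif_pos hb']
    have : (inner ℝ ((c ⟨a, ha'⟩ : EuclideanSpace ℝ (Fin n))) ((c ⟨b, hb'⟩ : EuclideanSpace ℝ (Fin n))) : ℝ)
        = inner ℝ (c ⟨a, ha'⟩) (c ⟨b, hb'⟩) := rfl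
    rw [this, orthonormal_iff_ite.mp c.orthonormal]
    by_cases hab : a = b
    · subst hab
      rw [if_pos rfl, if_pos (Subtype.ext rfl)]
    · rw [if_neg (fun h => hab (by injection h with h'; exact Fin.ext (by simpa using h'))),
        if_neg (fun h => hab (Subtype.ext_iff.mp h))]
  obtain ⟨b, hb⟩ := hv'on.exists_orthonormalBasis_extension_of_card_eq hrank
  refine ⟨b, fun j => ?_, ?_⟩
  · have hmem : Fin.castLE hn j ∈ {i : Fin n | (i : ℕ) < k} := j.isLt
    rw [hb _ hmem]
    simp only [hv', dif_pos (show ((Fin.castLE hn j : Fin n) : ℕ) < k from j.isLt)]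
    have : (⟨((Fin.castLE hn j : Fin n) : ℕ), j.isLt⟩ : Fin k) = j := by
      apply Fin.ext; simp
    rw [this]
    exact (c j).2
  · have hmem : Fin.castLE hn ⟨0, hk⟩ ∈ {i : Fin n | (i : ℕ) < k} := hk
    rw [hb _ hmem]
    simp only [hv', dif_pos (show ((Fin.castLE hn (⟨0, hk⟩ : Fin k) : Fin n) : ℕ) < k from hk)]
    have : (⟨((Fin.castLE hn (⟨0, hk⟩ : Fin k) : Fin n) : ℕ), hk⟩ : Fin k) = ⟨0, hk⟩ := by
      apply Fin.ext; simp
    rw [this, hc0]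

lemma exists_OV (hk : 1 ≤ k) (hn : k ≤ n) (hf : ∀ j, 1 ≤ bm f j) :
    ∃ (O : Matrix (Fin n) (Fin n) ℝ) (V : Matrix (Fin k) (Fin k) ℝ),
      O * Oᵀ = 1 ∧ V * Vᵀ = 1 ∧
      O * Uf f * Vᵀ = Matrix.of (fun (i : Fin n) (j : Fin k) =>
        if (i : ℕ) = (j : ℕ) then (1:ℝ) else 0) ∧
      O * Matrix.of (fun _ _ : Fin n => (1:ℝ)) * Oᵀ
        = (n:ℝ) • Matrix.of (fun i i' : Fin n =>
            if (i : ℕ) = 0 ∧ (i' : ℕ) = 0 then (1:ℝ) else 0) := by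
  classical
  obtain ⟨b, hspan, he1⟩ := exists_good_basis f hk hn hf
  have hn1 : 0 < n := lt_of_lt_of_le hk hn
  have hbon := orthonormal_iff_ite.mp b.orthonormal
  set O : Matrix (Fin n) (Fin n) ℝ := Matrix.of (fun i x => b i x) with hO
  set V : Matrix (Fin k) (Fin k) ℝ :=
    Matrix.of (fun j j' => ⟪(b (Fin.castLE hn j) : EuclideanSpace ℝ (Fin n)), uvec f j'⟫) with hV
  have hinner : ∀ x y : EuclideanSpace ℝ (Fin n), ∑ i, x i * y i = ⟪x, y⟫ :=
    fun x y => (inner_euclidean x y).symm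
  have hOO : O * Oᵀ = 1 := by
    ext i i'
    rw [Matrix.mul_apply]
    simp only [hO, Matrix.of_apply, Matrix.transpose_apply]
    rw [hinner (b i) (b i'), hbon, Matrix.one_apply]
  have hVV : V * Vᵀ = 1 := by
    ext j l
    rw [Matrix.mul_apply]
    simp only [hV, Matrix.of_apply, Matrix.transpose_apply]
    rw [span_inner_sum (uvec f) (uvec_orthonormal f hf) (hspan l) _, hbon, Matrix.one_apply]
    congr 1
    simp only [eq_iff_iff]
    constructor
    · intro h; exact Fin.castLE_injective hn h
    · intro h; rw [h]
  refine ⟨O, V, hOO, hVV, ?_, ?_⟩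
  · ext i j
    rw [Matrix.mul_apply]
    have hcol : ∀ j', (O * Uf f) i j' = ⟪(b i : EuclideanSpace ℝ (Fin n)), uvec f j'⟫ := by
      intro j'
      rw [Matrix.mul_apply, ← hinner (b i) (uvec f j')]
      apply Finset.sum_congr rfl
      intro x _
      simp [hO, Uf, uvec]
    simp only [hcol, Matrix.transpose_apply, hV, Matrix.of_apply]
    rw [span_inner_sum (uvec f) (uvec_orthonormal f hf) (hspan j) _, hbon]
    congr 1
    simp only [eq_iff_iff, Fin.ext_iff, Fin.coe_castLE]
  · have hrowsum : ∀ i, ∑ x, O i x = Real.sqrt n * (if (i : ℕ) = 0 then 1 else 0) := by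
      intro i
      have h1 : ∑ x, (b i) x * (e1vec n) x = ⟪(b i : EuclideanSpace ℝ (Fin n)), e1vec n⟫ :=
        hinner _ _
      have h2 : ⟪(b i : EuclideanSpace ℝ (Fin n)), e1vec n⟫
          = if i = Fin.castLE hn ⟨0, hk⟩ then (1:ℝ) else 0 := by
        rw [← he1, hbon]
      have h3 : ∑ x, (b i) x * (e1vec n) x = (∑ x, (b i) x) * (Real.sqrt n)⁻¹ := by
        rw [Finset.sum_mul]
        rfl
      have hsn : Real.sqrt n ≠ 0 := by
        have : (0:ℝ) < (n:ℝ) := by exact_mod_cast hn1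
        positivity
      have h5 := h3.symm.trans (h1.trans h2)
      have h4 : (∑ x, (b i) x) = Real.sqrt n * (if i = Fin.castLE hn ⟨0, hk⟩ then (1:ℝ) else 0) := by
        by_cases hi : i = Fin.castLE hn ⟨0, hk⟩
        · rw [if_pos hi] at h5
          rw [if_pos hi, mul_one]
          field_simp at h5
          exact h5
        · rw [if_neg hi] at h5
          rw [if_neg hi, mul_zero]
          field_simp at h5
          simpa using h5
      rw [show (∑ x, O i x) = ∑ x, (b i) x from rfl, h4]
      congr 1
      simp only [eq_iff_iff, Fin.ext_iff, Fin.coe_castLE]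
    ext i i'
    rw [Matrix.mul_apply]
    have hOJ : ∀ y, (O * Matrix.of (fun _ _ : Fin n => (1:ℝ))) i y = ∑ x, O i x := by
      intro y
      rw [Matrix.mul_apply]
      simp
    simp only [hOJ, Matrix.transpose_apply]
    rw [← Finset.mul_sum, hrowsum, hrowsum]
    have hsq : Real.sqrt n * Real.sqrt n = (n:ℝ) := by
      have : (0:ℝ) ≤ (n:ℝ) := by positivity
      exact Real.mul_self_sqrt this
    simp only [Matrix.smul_apply, Matrix.of_apply, smul_eq_mul]
    by_cases h1 : (i : ℕ) = 0 <;> by_cases h2 : (i' : ℕ) = 0 <;>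
      simp [h1, h2, hsq] <;> ring_nf <;> simp [hsq] <;> ring


noncomputable def E0 (n k : ℕ) : Matrix (Fin n ⊕ Fin k) (Fin n ⊕ Fin k) ℝ :=
  Matrix.fromBlocks
    (1 + (n:ℝ)⁻¹ • (1 : Matrix (Fin n) (Fin n) ℝ)
      - Matrix.of (fun i i' : Fin n => if (i : ℕ) = 0 ∧ (i' : ℕ) = 0 then (1:ℝ) else 0))
    (-(Real.sqrt n)⁻¹ • Matrix.of (fun (i : Fin n) (j : Fin k) =>
        if (i : ℕ) = (j : ℕ) then (1:ℝ) else 0))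
    (-(Real.sqrt n)⁻¹ • Matrix.of (fun (i : Fin n) (j : Fin k) =>
        if (i : ℕ) = (j : ℕ) then (1:ℝ) else 0))ᵀ 1

lemma conj_normLap {n k : ℕ} (f : Fin n → Fin k) (hk : 1 ≤ k) (hn : k ≤ n)
    (hf : ∀ j, 1 ≤ bm f j) :
    ∃ P : Matrix (Fin n ⊕ Fin k) (Fin n ⊕ Fin k) ℝ,
      P * Pᵀ = 1 ∧ Pᵀ * P = 1 ∧ P * normLap (FB f) * Pᵀ = E0 n k := by
  classical
  have hn1 : 0 < n := lt_of_lt_of_le hk hn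
  have hnne : (n:ℝ) ≠ 0 := by positivity
  obtain ⟨O, V, hOO, hVV, hOUV, hOJO⟩ := exists_OV f hk hn hf
  have hOO' : Oᵀ * O = 1 := mul_eq_one_comm.mp hOO
  have hVV' : Vᵀ * V = 1 := mul_eq_one_comm.mp hVV
  refine ⟨Matrix.fromBlocks O 0 0 V, ?_, ?_, ?_⟩
  · rw [Matrix.fromBlocks_transpose, Matrix.fromBlocks_multiply]
    simp [hOO, hVV, Matrix.fromBlocks_one]
  · rw [Matrix.fromBlocks_transpose, Matrix.fromBlocks_multiply]
    simp [hOO', hVV', Matrix.fromBlocks_one]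
  · rw [normLap_FB_blocks f hk hn hf, Matrix.fromBlocks_transpose,
      Matrix.fromBlocks_multiply, Matrix.fromBlocks_multiply]
    have hTL : (Matrix.of fun i i' : Fin n => if i = i' then (1:ℝ) else -(n:ℝ)⁻¹)
        = 1 + (n:ℝ)⁻¹ • (1 : Matrix (Fin n) (Fin n) ℝ)
          - (n:ℝ)⁻¹ • Matrix.of (fun _ _ : Fin n => (1:ℝ)) := by
      ext i i'
      by_cases h : i = i' <;>
        simp [h, Matrix.one_apply, Matrix.smul_apply] <;> field_simp
    have hTLconj : O * (Matrix.of fun i i' : Fin n => if i = i' then (1:ℝ) else -(n:ℝ)⁻¹) * Oᵀ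
        = 1 + (n:ℝ)⁻¹ • (1 : Matrix (Fin n) (Fin n) ℝ)
          - Matrix.of (fun i i' : Fin n => if (i : ℕ) = 0 ∧ (i' : ℕ) = 0 then (1:ℝ) else 0) := by
      rw [hTL]
      rw [Matrix.mul_sub, Matrix.mul_add, Matrix.sub_mul, Matrix.add_mul,
        Matrix.mul_one, Matrix.mul_smul, Matrix.smul_mul, Matrix.mul_smul, Matrix.smul_mul,
        Matrix.mul_one, hOO, hOJO, smul_smul, inv_mul_cancel₀ hnne, one_smul]
    have hTRconj : O * (-((Real.sqrt n)⁻¹ • Uf f)) * Vᵀ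
        = -(Real.sqrt n)⁻¹ • Matrix.of (fun (i : Fin n) (j : Fin k) =>
            if (i : ℕ) = (j : ℕ) then (1:ℝ) else 0) := by
      rw [Matrix.mul_neg, Matrix.neg_mul, Matrix.mul_smul, Matrix.smul_mul, hOUV, neg_smul]
    have hBLconj : V * (-((Real.sqrt n)⁻¹ • Uf f))ᵀ * Oᵀ
        = (-(Real.sqrt n)⁻¹ • Matrix.of (fun (i : Fin n) (j : Fin k) =>
            if (i : ℕ) = (j : ℕ) then (1:ℝ) else 0))ᵀ := by
      rw [← hTRconj, Matrix.transpose_mul, Matrix.transpose_mul, Matrix.transpose_transpose,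
        Matrix.mul_assoc]
    rw [E0]
    simp only [Matrix.transpose_zero, Matrix.mul_zero, Matrix.zero_mul, add_zero,
      zero_add, Matrix.mul_one]
    rw [hTLconj, hTRconj, hBLconj, hVV]


/-- Any two fuzzy balls on `n + k` vertices corresponding to partitions of `n` into `k`
positive parts are cospectral with respect to the normalized Laplacian. -/
theorem stmt15 (n k : ℕ) (hk : 1 ≤ k) (hn : k ≤ n)
    (f g : Fin n → Fin k)
    (hf : ∀ j, 1 ≤ (Finset.univ.filter fun i => f i = j).card)
    (hg : ∀ j, 1 ≤ (Finset.univ.filter fun i => g i = j).card) :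
    (normLap (FB f)).charpoly = (normLap (FB g)).charpoly := by
  have hf' : ∀ j, 1 ≤ bm f j := fun j => by simpa [bm] using hf j
  have hg' : ∀ j, 1 ≤ bm g j := fun j => by simpa [bm] using hg j
  obtain ⟨P, hP1, hP2, hPL⟩ := conj_normLap f hk hn hf'
  obtain ⟨Q, hQ1, hQ2, hQL⟩ := conj_normLap g hk hn hg'
  have hfE : normLap (FB f) = Pᵀ * E0 n k * P := by
    rw [← hPL]
    rw [← Matrix.mul_assoc, ← Matrix.mul_assoc, hP2, Matrix.one_mul,
      Matrix.mul_assoc, hP2, Matrix.mul_one]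
  have hgE : normLap (FB g) = Qᵀ * E0 n k * Q := by
    rw [← hQL]
    rw [← Matrix.mul_assoc, ← Matrix.mul_assoc, hQ2, Matrix.one_mul,
      Matrix.mul_assoc, hQ2, Matrix.mul_one]
  rw [hfE, hgE, charpoly_conj_aux P Pᵀ _ hP1 hP2, charpoly_conj_aux Q Qᵀ _ hQ1 hQ2]
end
end

section
/- Fix n ≥ k ≥ 1. For a partition n = m₁ + ⋯ + m_k into positive integers, define the inflated star IS(m₁,…,m_k) on n+k+1 vertices a, b₁,…,b_n, v₁,…,v_k where a is adjacent to all b_i (and to nothing else), the b_i are partitioned into blocks of sizes m₁,…,m_k, v_j is adjacent exactly to the b_i in the j-th block, and there are no other edges. Then any two inflated stars with the same n and k are cospectral with respect to the normalized Laplacian. -/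
open scoped Classical
/-- The inflated star determined by a block assignment `f : Fin n → Fin k`: the hub `a` is
adjacent to all `b_i`, and each `v_j` is adjacent exactly to the `b_i` with `f i = j`. -/
def IS {n k : ℕ} (f : Fin n → Fin k) : SimpleGraph (Unit ⊕ Fin n ⊕ Fin k) where
  Adj u v :=
    match u, v with
    | Sum.inl _, Sum.inr (Sum.inl _) => True
    | Sum.inr (Sum.inl _), Sum.inl _ => True
    | Sum.inr (Sum.inl i), Sum.inr (Sum.inr j) => f i = j
    | Sum.inr (Sum.inr j), Sum.inr (Sum.inl i) => f i = j
    | _, _ => False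
  symm := ⟨by
    rintro (a | i | j) (a' | i' | j') h <;> simp_all⟩
  loopless := ⟨by
    rintro (a | i | j) h <;> simp_all⟩

open Polynomial Matrix

variable {n k : ℕ} (f : Fin n → Fin k)

def mm (j : Fin k) : ℕ := (Finset.univ.filter fun i => f i = j).card

lemma deg_a (u : Unit) : (IS f).degree (Sum.inl u) = n := by
  have h : (IS f).neighborFinset (Sum.inl u)
      = Finset.univ.image (fun i : Fin n => (Sum.inr (Sum.inl i) : Unit ⊕ Fin n ⊕ Fin k)) := by
    ext w
    rcases w with _ | i | j <;> simp only [SimpleGraph.mem_neighborFinset] <;> simp [IS]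
  rw [SimpleGraph.degree, h,
    Finset.card_image_of_injective _ (fun a b hab => by simpa using hab)]
  simp

lemma deg_b (i : Fin n) : (IS f).degree (Sum.inr (Sum.inl i)) = 2 := by
  have h : (IS f).neighborFinset (Sum.inr (Sum.inl i))
      = {Sum.inl (), Sum.inr (Sum.inr (f i))} := by
    ext w
    rcases w with _ | i' | j <;> simp only [SimpleGraph.mem_neighborFinset] <;> simp [IS, eq_comm]
  rw [SimpleGraph.degree, h]
  rw [Finset.card_insert_of_notMem (by simp), Finset.card_singleton]

lemma deg_v (j : Fin k) : (IS f).degree (Sum.inr (Sum.inr j)) = mm f j := by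
  have h : (IS f).neighborFinset (Sum.inr (Sum.inr j))
      = (Finset.univ.filter fun i => f i = j).image
          (fun i : Fin n => (Sum.inr (Sum.inl i) : Unit ⊕ Fin n ⊕ Fin k)) := by
    ext w
    rcases w with _ | i' | j' <;> simp only [SimpleGraph.mem_neighborFinset] <;> simp [IS]
  rw [SimpleGraph.degree, h,
    Finset.card_image_of_injective _ (fun a b hab => by simpa using hab), mm]

lemma mm_sum : ∑ j, mm f j = n := by
  have := Finset.card_eq_sum_card_fiberwise (f := f) (s := Finset.univ) (t := Finset.univ)
    (fun x _ => Finset.mem_univ _)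
  simpa [mm] using this.symm

noncomputable def uu (n : ℕ) {k : ℕ} (f : Fin n → Fin k) : Fin k → ℝ :=
  fun j => Real.sqrt ((mm f j : ℝ) / n)

noncomputable def Ym (f : Fin n → Fin k) : Matrix (Unit ⊕ Fin n ⊕ Fin k) (Fin k ⊕ Fin k) ℝ :=
  fun v c =>
    match v, c with
    | Sum.inl _, Sum.inl j => uu n f j
    | Sum.inr (Sum.inr j'), Sum.inl j => if j' = j then 1 else 0
    | Sum.inr (Sum.inl i), Sum.inr j =>
        if f i = j then (Real.sqrt 2)⁻¹ * (Real.sqrt (mm f j : ℝ))⁻¹ else 0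
    | _, _ => 0

noncomputable def Jm (k : ℕ) : Matrix (Fin k ⊕ Fin k) (Fin k ⊕ Fin k) ℝ :=
  Matrix.fromBlocks 0 1 1 0

lemma norm1 (hn0 : 0 < n) : uu n f ⬝ᵥ uu n f = 1 := by
  have h1 : ∀ j, uu n f j * uu n f j = (mm f j : ℝ) / n := by
    intro j
    rw [uu, Real.mul_self_sqrt (by positivity)]
  rw [dotProduct]
  simp only [h1]
  rw [← Finset.sum_div]
  rw [show ∑ j, ((mm f j : ℝ)) = ((n : ℝ)) by rw [← Nat.cast_sum, mm_sum]]
  field_simp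

lemma YJYt_apply (u v : Unit ⊕ Fin n ⊕ Fin k) :
    (Ym f * (Jm k * (Ym f)ᵀ)) u v
      = ∑ j : Fin k, (Ym f u (Sum.inl j) * Ym f v (Sum.inr j)
          + Ym f u (Sum.inr j) * Ym f v (Sum.inl j)) := by
  have hJ : ∀ c v', (Jm k * (Ym f)ᵀ) c v'
      = match c with
        | Sum.inl j => Ym f v' (Sum.inr j)
        | Sum.inr j => Ym f v' (Sum.inl j) := by
    intro c v'
    rcases c with j | j <;>
      simp [Jm, Matrix.mul_apply, Fintype.sum_sum_type, Matrix.fromBlocks_apply₁₁,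
        Matrix.fromBlocks_apply₁₂, Matrix.fromBlocks_apply₂₁, Matrix.fromBlocks_apply₂₂,
        Matrix.one_apply, Finset.sum_ite_eq, Matrix.transpose_apply]
  rw [Matrix.mul_apply, Fintype.sum_sum_type]
  simp only [hJ]
  rw [← Finset.sum_add_distrib]

lemma diag_mul_diag_apply {V : Type*} [Fintype V] (d e : V → ℝ) (M : Matrix V V ℝ)
    (u v : V) :
    (Matrix.diagonal d * M * Matrix.diagonal e) u v = d u * M u v * e v := by
  rw [Matrix.mul_diagonal, Matrix.diagonal_mul]

lemma degM_apply {V : Type*} [Fintype V] (G : SimpleGraph V) (u v : V) :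
    degM G u v = if u = v then (G.degree u : ℝ) else 0 := by
  rw [degM, Matrix.diagonal_apply]

lemma sqrt_inv_mul_self (x : ℝ) (hx : 0 < x) :
    (Real.sqrt x)⁻¹ * x * (Real.sqrt x)⁻¹ = 1 := by
  have h : Real.sqrt x ≠ 0 := ne_of_gt (Real.sqrt_pos.mpr hx)
  field_simp
  rw [Real.sq_sqrt hx.le]

lemma uu_mul (j : Fin k) (hn0 : 0 < n) (hm : 1 ≤ mm f j) :
    uu n f j * ((Real.sqrt 2)⁻¹ * (Real.sqrt (mm f j : ℝ))⁻¹)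
      = (Real.sqrt (n : ℝ))⁻¹ * (Real.sqrt 2)⁻¹ := by
  have hmpos : (0 : ℝ) < (mm f j : ℝ) := by exact_mod_cast hm
  have hm0 : Real.sqrt (mm f j : ℝ) ≠ 0 := ne_of_gt (Real.sqrt_pos.mpr hmpos)
  have hn0' : Real.sqrt (n : ℝ) ≠ 0 :=
    ne_of_gt (Real.sqrt_pos.mpr (by exact_mod_cast hn0))
  rw [uu, Real.sqrt_div (by positivity)]
  field_simp

lemma normLap_eq (hk : 1 ≤ k) (hn : k ≤ n) (hf : ∀ j, 1 ≤ mm f j) :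
    normLap (IS f) = 1 - Ym f * (Jm k * (Ym f)ᵀ) := by
  have hn0 : 0 < n := le_trans hk hn
  ext u v
  rw [Matrix.sub_apply, YJYt_apply]
  rw [normLap, diag_mul_diag_apply, Matrix.sub_apply]
  rcases u with ⟨⟩ | i | j <;> rcases v with ⟨⟩ | i' | j' <;>
      (try simp [degM_apply, adjM, Ym, Matrix.one_apply, Finset.sum_ite_eq,
        Finset.sum_ite_eq']) <;>
      simp only [deg_a, deg_b, deg_v] <;>
      (try simp [IS])
  · exact sqrt_inv_mul_self _ (by exact_mod_cast hn0)
  · exact (uu_mul f (f i') hn0 (hf _)).symm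
  · linear_combination (-1 : ℝ) * uu_mul f (f i) hn0 (hf (f i))
  · split_ifs with h
    · exact sqrt_inv_mul_self 2 (by norm_num)
    · rfl
  · split_ifs with h1 h2
    · rw [← h1]; simp
    all_goals simp_all
  · by_cases h : f i' = j
    · subst h; simp [mul_comm]
    · simp [h, Ne.symm h]
  · split_ifs with h
    · subst h; exact sqrt_inv_mul_self _ (by exact_mod_cast hf j)
    · rfl

lemma gram (hn0 : 0 < n) (hf : ∀ j, 1 ≤ mm f j) :
    (Ym f)ᵀ * Ym f
      = Matrix.fromBlocks (1 + vecMulVec (uu n f) (uu n f)) 0 0 ((2:ℝ)⁻¹ • 1) := by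
  ext c c'
  rw [Matrix.mul_apply, Fintype.sum_sum_type]
  rcases c with j | j <;> rcases c' with j' | j' <;>
    simp [Ym, Matrix.transpose_apply, Matrix.fromBlocks_apply₁₁, Matrix.fromBlocks_apply₁₂,
      Matrix.fromBlocks_apply₂₁, Matrix.fromBlocks_apply₂₂, Matrix.vecMulVec_apply,
      Matrix.one_apply, Matrix.add_apply, Matrix.smul_apply, Fintype.sum_sum_type,
      ite_mul, mul_ite, Finset.sum_ite_eq, Finset.sum_ite_eq']
  · by_cases h : j = j'
    · simp [h]; ring
    · simp [h, Ne.symm h]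
  · by_cases h : j = j'
    · subst h
      rw [if_pos rfl]
      have hcol : ∀ i : Fin n, (if f i = j then if f i = j
            then (√2)⁻¹ * (√(mm f j : ℝ))⁻¹ * ((√2)⁻¹ * (√(mm f j : ℝ))⁻¹) else 0 else 0)
          = if f i = j then (√2)⁻¹ * (√(mm f j : ℝ))⁻¹ * ((√2)⁻¹ * (√(mm f j : ℝ))⁻¹) else 0 := by
        intro i; split_ifs <;> rfl
      rw [Finset.sum_congr rfl fun i _ => hcol i, ← Finset.sum_filter, Finset.sum_const]
      have hmpos : (0:ℝ) < (mm f j : ℝ) := by exact_mod_cast hf j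
      have h2 : Real.sqrt 2 * Real.sqrt 2 = 2 := Real.mul_self_sqrt (by norm_num)
      have hm : Real.sqrt (mm f j : ℝ) * Real.sqrt (mm f j : ℝ) = (mm f j : ℝ) :=
        Real.mul_self_sqrt hmpos.le
      have e : (√2)⁻¹ * (√(mm f j : ℝ))⁻¹ * ((√2)⁻¹ * (√(mm f j : ℝ))⁻¹)
          = ((√2 * √2) * (√(mm f j : ℝ) * √(mm f j : ℝ)))⁻¹ := by
        rw [mul_inv, mul_inv, mul_inv]; ring
      rw [e, h2, hm]
      show (mm f j : ℕ) • ((2 * (mm f j : ℝ))⁻¹) = 2⁻¹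
      rw [nsmul_eq_mul, mul_inv]
      field_simp
    · rw [if_neg h]
      apply Finset.sum_eq_zero
      intro i _
      split_ifs with a b
      · exact absurd (b.symm.trans a) h
      · rfl
      · rfl

lemma eval_charpoly' {m : Type*} [Fintype m] [DecidableEq m] (M : Matrix m m ℝ) (x : ℝ) :
    (M.charpoly).eval x = (x • (1 : Matrix m m ℝ) - M).det := by
  rw [Matrix.charpoly, ← Polynomial.coe_evalRingHom, RingHom.map_det]
  congr 1
  ext i j
  by_cases h : i = j
  · subst h; simp [Matrix.charmatrix_apply_eq, Matrix.one_apply]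
  · simp [Matrix.charmatrix_apply_ne _ _ _ h, Matrix.one_apply, h]

lemma charpoly_mul_comm_aux {α β : Type*} [Fintype α] [Fintype β] [DecidableEq α] [DecidableEq β]
    [Nonempty α] [Nonempty β] (Y : Matrix α β ℝ) (Z : Matrix β α ℝ) :
    X ^ (Fintype.card β) * (Y * Z).charpoly = X ^ (Fintype.card α) * (Z * Y).charpoly := by
  apply Polynomial.funext
  intro x
  simp only [Polynomial.eval_mul, Polynomial.eval_pow, Polynomial.eval_X, eval_charpoly']
  rcases eq_or_ne x 0 with h | h
  · simp [h, zero_pow, Fintype.card_ne_zero]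
  · have e1 : x • (1 : Matrix α α ℝ) - Y * Z = x • (1 - (x⁻¹ • Y) * Z) := by
      rw [Matrix.smul_mul, smul_sub, smul_smul, mul_inv_cancel₀ h, one_smul]
    have e2 : x • (1 : Matrix β β ℝ) - Z * Y = x • (1 - Z * (x⁻¹ • Y)) := by
      rw [Matrix.mul_smul, smul_sub, smul_smul, mul_inv_cancel₀ h, one_smul]
    rw [e1, e2, Matrix.det_smul, Matrix.det_smul, Matrix.det_one_sub_mul_comm]
    ring

lemma charpoly_conj' {α : Type*} [Fintype α] [DecidableEq α] [Nonempty α]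
    (P M : Matrix α α ℝ) (hP : P * P = 1) : (P * M * P).charpoly = M.charpoly := by
  have h := charpoly_mul_comm_aux (P * M) P
  rw [← Matrix.mul_assoc P P M, hP, Matrix.one_mul] at h
  exact mul_left_cancel₀ (pow_ne_zero _ Polynomial.X_ne_zero) h

lemma charpoly_one_sub' {α : Type*} [Fintype α] [DecidableEq α] {M N : Matrix α α ℝ}
    (h : M.charpoly = N.charpoly) : ((1 : Matrix α α ℝ) - M).charpoly = (1 - N).charpoly := by
  apply Polynomial.funext
  intro x
  have e : ∀ (M : Matrix α α ℝ), x • (1 : Matrix α α ℝ) - (1 - M)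
      = -((1 - x) • (1 : Matrix α α ℝ) - M) := by
    intro M
    ext i j
    by_cases h' : i = j <;>
      simp [Matrix.sub_apply, Matrix.smul_apply, Matrix.neg_apply, Matrix.one_apply, h'] <;> ring
  rw [eval_charpoly', eval_charpoly', e, e, Matrix.det_neg, Matrix.det_neg,
    ← eval_charpoly', ← eval_charpoly', h]

lemma vMV_mul_vMV {ι : Type*} [Fintype ι] (a b c d : ι → ℝ) :
    vecMulVec a b * vecMulVec c d = (b ⬝ᵥ c) • vecMulVec a d := by
  ext i j
  simp only [Matrix.mul_apply, Matrix.vecMulVec_apply, Matrix.smul_apply, dotProduct,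
    smul_eq_mul, Finset.sum_mul, Finset.mul_sum]
  apply Finset.sum_congr rfl
  intros; ring

lemma vMV_sub_left {ι : Type*} [Fintype ι] (a b c : ι → ℝ) :
    vecMulVec (a - b) c = vecMulVec a c - vecMulVec b c := by
  ext i j; simp [Matrix.vecMulVec_apply, sub_mul]

lemma vMV_sub_right {ι : Type*} [Fintype ι] (a b c : ι → ℝ) :
    vecMulVec a (b - c) = vecMulVec a b - vecMulVec a c := by
  ext i j; simp [Matrix.vecMulVec_apply, mul_sub]

lemma householder {ι : Type*} [Fintype ι] [DecidableEq ι] (u v : ι → ℝ)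
    (hu : u ⬝ᵥ u = 1) (hv : v ⬝ᵥ v = 1) (hne : u ≠ v) :
    ∃ P : Matrix ι ι ℝ, P * P = 1 ∧ P * vecMulVec u u * P = vecMulVec v v := by
  have hwne : u - v ≠ 0 := sub_ne_zero_of_ne hne
  have hcu : (u - v) ⬝ᵥ (u - v) = 2 * ((u - v) ⬝ᵥ u) := by
    simp only [sub_dotProduct, dotProduct_sub, hu, hv, dotProduct_comm v u]
    ring
  have hcne : (u - v) ⬝ᵥ (u - v) ≠ 0 := fun h => hwne (dotProduct_self_eq_zero.mp h)
  have hwu : (u - v) ⬝ᵥ u ≠ 0 := by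
    intro h0; exact hcne (by rw [hcu, h0, mul_zero])
  set c : ℝ := (u - v) ⬝ᵥ (u - v) with hc
  set s : ℝ := 2 / c with hs
  have key : s * ((u - v) ⬝ᵥ u) = 1 := by
    have hwu' : u ⬝ᵥ u - v ⬝ᵥ u ≠ 0 := by rwa [sub_dotProduct] at hwu
    rw [hs, hcu]; field_simp
  have keyu : s * (u ⬝ᵥ (u - v)) = 1 := by rw [dotProduct_comm]; exact key
  have hsc : s * c = 2 := by rw [hs]; field_simp
  refine ⟨1 - s • vecMulVec (u - v) (u - v), ?_, ?_⟩
  · have h2 : (s • vecMulVec (u - v) (u - v)) * (s • vecMulVec (u - v) (u - v))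
        = (2 * s) • vecMulVec (u - v) (u - v) := by
      rw [Matrix.smul_mul, Matrix.mul_smul, vMV_mul_vMV, ← hc, smul_smul, smul_smul]
      congr 1
      rw [← hsc]; ring
    rw [sub_mul, one_mul, mul_sub, mul_one, h2]
    module
  · have h1 : (1 - s • vecMulVec (u - v) (u - v)) * vecMulVec u u = vecMulVec v u := by
      rw [sub_mul, one_mul, Matrix.smul_mul, vMV_mul_vMV, smul_smul, key, one_smul,
        ← vMV_sub_left, sub_sub_cancel]
    rw [h1, mul_sub, mul_one, Matrix.mul_smul, vMV_mul_vMV, smul_smul, keyu, one_smul,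
      ← vMV_sub_right, sub_sub_cancel]

/-- Any two inflated stars on `n + k + 1` vertices corresponding to partitions of `n` into
`k` positive parts are cospectral with respect to the normalized Laplacian. -/
theorem stmt16 (n k : ℕ) (hk : 1 ≤ k) (hn : k ≤ n)
    (f g : Fin n → Fin k)
    (hf : ∀ j, 1 ≤ (Finset.univ.filter fun i => f i = j).card)
    (hg : ∀ j, 1 ≤ (Finset.univ.filter fun i => g i = j).card) :
    (normLap (IS f)).charpoly = (normLap (IS g)).charpoly := by
  have hn0 : 0 < n := le_trans hk hn
  have hf' : ∀ j, 1 ≤ mm f j := hf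
  have hg' : ∀ j, 1 ≤ mm g j := hg
  haveI : Nonempty (Fin k) := ⟨⟨0, hk⟩⟩
  rw [normLap_eq f hk hn hf', normLap_eq g hk hn hg']
  apply charpoly_one_sub'
  have Af := charpoly_mul_comm_aux (Ym f) (Jm k * (Ym f)ᵀ)
  have Ag := charpoly_mul_comm_aux (Ym g) (Jm k * (Ym g)ᵀ)
  rw [Matrix.mul_assoc, gram f hn0 hf'] at Af
  rw [Matrix.mul_assoc, gram g hn0 hg'] at Ag
  have key : (Jm k * Matrix.fromBlocks (1 + vecMulVec (uu n f) (uu n f)) 0 0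
        ((2:ℝ)⁻¹ • 1)).charpoly
      = (Jm k * Matrix.fromBlocks (1 + vecMulVec (uu n g) (uu n g)) 0 0
        ((2:ℝ)⁻¹ • 1)).charpoly := by
    by_cases huv : uu n f = uu n g
    · rw [huv]
    · obtain ⟨P, hP1, hP2⟩ := householder (uu n f) (uu n g) (norm1 f hn0) (norm1 g hn0) huv
      have hQ : (Matrix.fromBlocks P 0 0 P) * (Matrix.fromBlocks P 0 0 P)
          = (1 : Matrix (Fin k ⊕ Fin k) (Fin k ⊕ Fin k) ℝ) := by
        rw [Matrix.fromBlocks_multiply]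
        simp [hP1, Matrix.fromBlocks_one]
      have hPA : P * ((1 : Matrix (Fin k) (Fin k) ℝ) + vecMulVec (uu n f) (uu n f)) * P
          = 1 + vecMulVec (uu n g) (uu n g) := by
        rw [Matrix.mul_add, Matrix.mul_one, Matrix.add_mul, hP1, hP2]
      have hPD : P * ((2:ℝ)⁻¹ • (1 : Matrix (Fin k) (Fin k) ℝ)) * P
          = (2:ℝ)⁻¹ • 1 := by
        simp only [Matrix.mul_smul, Matrix.mul_one, Matrix.smul_mul, hP1]
      have hconj : (Matrix.fromBlocks P 0 0 P)
            * (Jm k * Matrix.fromBlocks (1 + vecMulVec (uu n f) (uu n f)) 0 0 ((2:ℝ)⁻¹ • 1))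
            * (Matrix.fromBlocks P 0 0 P)
          = Jm k * Matrix.fromBlocks (1 + vecMulVec (uu n g) (uu n g)) 0 0 ((2:ℝ)⁻¹ • 1) := by
        rw [Jm, Matrix.fromBlocks_multiply, Matrix.fromBlocks_multiply,
          Matrix.fromBlocks_multiply, Matrix.fromBlocks_multiply]
        congr 1 <;> simp [← Matrix.mul_assoc, hPA, hPD, hP1, Matrix.mul_smul, Matrix.smul_mul]
      rw [← hconj, charpoly_conj' _ _ hQ]
  rw [key, ← Ag] at Af
  exact mul_left_cancel₀ (pow_ne_zero _ Polynomial.X_ne_zero) Af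
end
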